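/- Assume every buyer distribution and every seller distribution is regular. Then there exist a deterministic allocation X mapping each type profile (b,s) to a matching X(b,s) ∈ F, and payments p^B_i(b,s), p^S_j(b,s), such that the mechanism (X, p^B, p^S) is DSIC, ex-post IR, and ex-ante WBB, and moreover 2·GFT(X) ≥ GFT(M') for every implementable mechanism M' that is IR, BIC and ex-ante WBB. -/

import Mathlib

open Finset

namespace Stmt10

variable {n m : ℕ} {K : Fin n → ℕ} {K' : Fin m → ℕ}

/-- A buyer type profile. -/
abbrev ProfileB (K : Fin n → ℕ) := ∀ i, Fin (K i)

/-- A seller type profile. -/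
abbrev ProfileS (K' : Fin m → ℕ) := ∀ j, Fin (K' j)

/-- Expectation over the independent product of buyers' and sellers' distributions. -/
def Ex (f : ∀ i, Fin (K i) → ℝ) (g : ∀ j, Fin (K' j) → ℝ)
    (h : ProfileB K → ProfileS K' → ℝ) : ℝ :=
  ∑ b : ProfileB K, ∑ s : ProfileS K',
    ((∏ i, f i (b i)) * ∏ j, g j (s j)) * h b s

/-- `x` is implementable w.r.t. the feasibility constraint `F`. -/
def Implementable (F : Set (Finset (Fin n × Fin m)))
    (x : ProfileB K → ProfileS K' → Fin n × Fin m → ℝ) : Prop :=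
  ∀ b s, ∃ γ : Finset (Fin n × Fin m) → ℝ,
    (∀ M, 0 ≤ γ M) ∧ (∀ M, γ M ≠ 0 → M ∈ F) ∧ (∑ M, γ M = 1) ∧
    (∀ e, x b s e = ∑ M, γ M * (if e ∈ M then 1 else 0))

/-- `x^B_i(b,s)` for a deterministic allocation `X`: `1` iff buyer `i` trades. -/
def detXB (X : ProfileB K → ProfileS K' → Finset (Fin n × Fin m))
    (i : Fin n) (b : ProfileB K) (s : ProfileS K') : ℝ :=
  if ∃ j, (i, j) ∈ X b s then 1 else 0

/-- `x^S_j(b,s)` for a deterministic allocation `X`: `1` iff seller `j` trades. -/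
def detXS (X : ProfileB K → ProfileS K' → Finset (Fin n × Fin m))
    (j : Fin m) (b : ProfileB K) (s : ProfileS K') : ℝ :=
  if ∃ i, (i, j) ∈ X b s then 1 else 0

/-- Interim utility of buyer `i` with true type `t` reporting `t'`
(for a randomized allocation `x`). -/
def utilB (vB : ∀ i, Fin (K i) → ℝ)
    (f : ∀ i, Fin (K i) → ℝ) (g : ∀ j, Fin (K' j) → ℝ)
    (x : ProfileB K → ProfileS K' → Fin n × Fin m → ℝ)
    (pB : Fin n → ProfileB K → ProfileS K' → ℝ)
    (i : Fin n) (t t' : Fin (K i)) : ℝ :=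
  Ex f g (fun b s =>
    vB i t * (∑ j, x (Function.update b i t') s (i, j))
      - pB i (Function.update b i t') s)

/-- Interim utility of seller `j` with true type `t` reporting `t'`. -/
def utilS (vS : ∀ j, Fin (K' j) → ℝ)
    (f : ∀ i, Fin (K i) → ℝ) (g : ∀ j, Fin (K' j) → ℝ)
    (x : ProfileB K → ProfileS K' → Fin n × Fin m → ℝ)
    (pS : Fin m → ProfileB K → ProfileS K' → ℝ)
    (j : Fin m) (t t' : Fin (K' j)) : ℝ :=
  Ex f g (fun b s =>
    pS j b (Function.update s j t')
      - vS j t * (∑ i, x b (Function.update s j t') (i, j)))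

/-- Buyer's Myerson virtual value. -/
noncomputable def phi (Ki : ℕ) (β f : Fin Ki → ℝ) (r : Fin Ki) : ℝ :=
  β r - ((if h : (r : ℕ) + 1 < Ki then β ⟨(r : ℕ) + 1, h⟩ else β r) - β r)
      * (∑ l ∈ Finset.Ioi r, f l) / f r

/-- Seller's Myerson virtual value. -/
noncomputable def tau (Kj : ℕ) (α g : Fin Kj → ℝ) (r : Fin Kj) : ℝ :=
  α r + (α r - (if 0 < (r : ℕ) then
        α ⟨(r : ℕ) - 1, Nat.lt_of_le_of_lt (Nat.sub_le _ _) r.isLt⟩ else α r))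
      * (∑ l ∈ Finset.Iio r, g l) / g r

section Chains

/-- next value (matches the dite in `phi`) -/
noncomputable def vnext {k : ℕ} (v : Fin k → ℝ) (t : Fin k) : ℝ :=
  if h : (t : ℕ) + 1 < k then v ⟨(t : ℕ) + 1, h⟩ else v t

/-- previous value (matches the ite in `tau`) -/
noncomputable def vprev {k : ℕ} (v : Fin k → ℝ) (t : Fin k) : ℝ :=
  if 0 < (t : ℕ) then v ⟨(t : ℕ) - 1, Nat.lt_of_le_of_lt (Nat.sub_le _ _) t.isLt⟩ else v t

lemma Ici_castSucc' {k : ℕ} (i : Fin k) :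
    Finset.Ici (i.castSucc) = insert i.castSucc (Finset.Ici i.succ) := by
  ext t
  simp only [Finset.mem_Ici, Finset.mem_insert, Fin.le_def, Fin.ext_iff,
    Fin.coe_castSucc, Fin.val_succ]
  omega

lemma Ioi_castSucc' {k : ℕ} (i : Fin k) :
    Finset.Ioi (i.castSucc) = Finset.Ici i.succ := by
  ext t
  simp only [Finset.mem_Ioi, Finset.mem_Ici, Fin.le_def, Fin.lt_def,
    Fin.coe_castSucc, Fin.val_succ]
  omega

lemma Iic_succ' {k : ℕ} (i : Fin k) :
    Finset.Iic (i.succ) = insert i.succ (Finset.Iic i.castSucc) := by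
  ext t
  simp only [Finset.mem_Iic, Finset.mem_insert, Fin.le_def, Fin.ext_iff,
    Fin.coe_castSucc, Fin.val_succ]
  omega

lemma Iio_succ' {k : ℕ} (i : Fin k) :
    Finset.Iio (i.succ) = Finset.Iic i.castSucc := by
  ext t
  simp only [Finset.mem_Iio, Finset.mem_Iic, Fin.le_def, Fin.lt_def,
    Fin.coe_castSucc, Fin.val_succ]
  omega

lemma Iio_succ_ins' {k : ℕ} (i : Fin k) :
    Finset.Iio (i.succ) = insert i.castSucc (Finset.Iio i.castSucc) := by
  ext t
  simp only [Finset.mem_Iio, Finset.mem_insert, Fin.lt_def, Fin.ext_iff,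
    Fin.coe_castSucc, Fin.val_succ]
  omega

lemma Ioi_castSucc_ins' {k : ℕ} (i : Fin k) :
    Finset.Ioi (i.castSucc) = insert i.succ (Finset.Ioi i.succ) := by
  ext t
  simp only [Finset.mem_Ioi, Finset.mem_insert, Fin.lt_def, Fin.ext_iff,
    Fin.coe_castSucc, Fin.val_succ]
  omega

lemma Ici_last' {k : ℕ} : Finset.Ici (Fin.last k) = {Fin.last k} := by
  ext t
  simp only [Finset.mem_Ici, Finset.mem_singleton, Fin.le_def, Fin.ext_iff, Fin.val_last]
  omega

lemma Iic_zero' {k : ℕ} : Finset.Iic (0 : Fin (k+1)) = {(0 : Fin (k+1))} := by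
  ext t
  simp only [Finset.mem_Iic, Finset.mem_singleton, Fin.le_def, Fin.ext_iff, Fin.val_zero]
  omega

lemma Ioi_last' {k : ℕ} : Finset.Ioi (Fin.last k) = ∅ := by
  ext t
  simp only [Finset.mem_Ioi, Finset.notMem_empty, iff_false, Fin.lt_def, Fin.val_last]
  omega

lemma Iio_zero' {k : ℕ} : Finset.Iio (0 : Fin (k+1)) = ∅ := by
  ext t
  simp only [Finset.mem_Iio, Finset.notMem_empty, iff_false, Fin.lt_def, Fin.val_zero]
  omega

lemma not_mem_Iio_self {k : ℕ} (i : Fin k) : i ∉ Finset.Iio i :=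
  fun h => absurd (Finset.mem_Iio.mp h) (lt_irrefl _)

lemma not_mem_Ioi_self {k : ℕ} (i : Fin k) : i ∉ Finset.Ioi i :=
  fun h => absurd (Finset.mem_Ioi.mp h) (lt_irrefl _)

lemma phi_expand {k : ℕ} (β fd : Fin k → ℝ) (hf : ∀ t, 0 < fd t) (t : Fin k) :
    fd t * (β t - phi k β fd t) = (vnext β t - β t) * ∑ l ∈ Finset.Ioi t, fd l := by
  have hne : fd t ≠ 0 := (hf t).ne'
  rw [phi, vnext]
  split
  · field_simp; ring
  · simp

lemma tau_expand {k : ℕ} (α gd : Fin k → ℝ) (hg : ∀ t, 0 < gd t) (t : Fin k) :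
    gd t * (tau k α gd t - α t) = (α t - vprev α t) * ∑ l ∈ Finset.Iio t, gd l := by
  have hne : gd t ≠ 0 := (hg t).ne'
  rw [tau, vprev]
  split
  · field_simp; ring
  · simp

lemma phi_le {k : ℕ} (β fd : Fin k → ℝ) (hmono : Monotone β) (hf : ∀ t, 0 < fd t)
    (t : Fin k) : phi k β fd t ≤ β t := by
  rw [phi]
  have h1 : β t ≤ (if h : (t : ℕ) + 1 < k then β ⟨(t : ℕ) + 1, h⟩ else β t) := by
    split
    · exact hmono (by simp [Fin.le_def])
    · exact le_refl _
  have h2 : 0 ≤ ∑ l ∈ Finset.Ioi t, fd l :=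
    Finset.sum_nonneg fun l _ => (hf l).le
  have h3 : 0 ≤ ((if h : (t : ℕ) + 1 < k then β ⟨(t : ℕ) + 1, h⟩ else β t) - β t)
      * (∑ l ∈ Finset.Ioi t, fd l) / fd t :=
    div_nonneg (mul_nonneg (by linarith) h2) (hf t).le
  linarith

lemma tau_ge {k : ℕ} (α gd : Fin k → ℝ) (hmono : Monotone α) (hg : ∀ t, 0 < gd t)
    (t : Fin k) : α t ≤ tau k α gd t := by
  rw [tau]
  have h1 : (if 0 < (t : ℕ) then
      α ⟨(t : ℕ) - 1, Nat.lt_of_le_of_lt (Nat.sub_le _ _) t.isLt⟩ else α t) ≤ α t := by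
    split
    · exact hmono (by simp [Fin.le_def])
    · exact le_refl _
  have h2 : 0 ≤ ∑ l ∈ Finset.Iio t, gd l :=
    Finset.sum_nonneg fun l _ => (hg l).le
  have h3 : 0 ≤ (α t - (if 0 < (t : ℕ) then
      α ⟨(t : ℕ) - 1, Nat.lt_of_le_of_lt (Nat.sub_le _ _) t.isLt⟩ else α t))
      * (∑ l ∈ Finset.Iio t, gd l) / gd t :=
    div_nonneg (mul_nonneg (by linarith) h2) (hg t).le
  linarith

lemma telescopeB {k : ℕ} (β fd : Fin k → ℝ) (hf : ∀ t, 0 < fd t) (t₀ : Fin k) :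
    ∑ t ∈ Finset.Ici t₀, fd t * phi k β fd t = β t₀ * ∑ t ∈ Finset.Ici t₀, fd t := by
  have hk := t₀.pos
  obtain ⟨k', rfl⟩ : ∃ k', k = k' + 1 := ⟨k - 1, by omega⟩
  induction t₀ using Fin.reverseInduction with
  | last =>
      rw [Ici_last']
      simp only [Finset.sum_singleton]
      have : phi (k'+1) β fd (Fin.last k') = β (Fin.last k') := by
        rw [phi, dif_neg (by simp)]
        simp
      rw [this]; ring
  | cast i ih =>
      have hne : fd i.castSucc ≠ 0 := (hf _).ne'
      have hnm : i.castSucc ∉ Finset.Ici i.succ := by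
        simp only [Finset.mem_Ici, Fin.le_def, Fin.coe_castSucc, Fin.val_succ]
        omega
      rw [Ici_castSucc', Finset.sum_insert hnm, Finset.sum_insert hnm, ih]
      have hphi : phi (k'+1) β fd i.castSucc
          = β i.castSucc - (β i.succ - β i.castSucc)
            * (∑ t ∈ Finset.Ici i.succ, fd t) / fd i.castSucc := by
        have h1 : ((i.castSucc : ℕ) + 1 < k' + 1) := by
          simp only [Fin.coe_castSucc]; omega
        have e1 : (⟨((i.castSucc : Fin (k'+1)) : ℕ) + 1, h1⟩ : Fin (k'+1)) = i.succ := by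
          ext; simp
        rw [phi, dif_pos h1, e1, Ioi_castSucc']
      rw [hphi]
      field_simp
      ring

lemma telescopeS {k : ℕ} (α gd : Fin k → ℝ) (hg : ∀ t, 0 < gd t) (t₀ : Fin k) :
    ∑ t ∈ Finset.Iic t₀, gd t * tau k α gd t = α t₀ * ∑ t ∈ Finset.Iic t₀, gd t := by
  have hk := t₀.pos
  obtain ⟨k', rfl⟩ : ∃ k', k = k' + 1 := ⟨k - 1, by omega⟩
  induction t₀ using Fin.induction with
  | zero =>
      rw [Iic_zero']
      simp only [Finset.sum_singleton]
      have : tau (k'+1) α gd 0 = α 0 := by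
        rw [tau, if_neg (by simp)]
        simp
      rw [this]; ring
  | succ i ih =>
      have hne : gd i.succ ≠ 0 := (hg _).ne'
      have hnm : i.succ ∉ Finset.Iic i.castSucc := by
        simp only [Finset.mem_Iic, Fin.le_def, Fin.coe_castSucc, Fin.val_succ]
        omega
      rw [Iic_succ', Finset.sum_insert hnm, Finset.sum_insert hnm, ih]
      have htau : tau (k'+1) α gd i.succ
          = α i.succ + (α i.succ - α i.castSucc)
            * (∑ t ∈ Finset.Iic i.castSucc, gd t) / gd i.succ := by
        have h1 : (0 : ℕ) < ((i.succ : Fin (k'+1)) : ℕ) := by simp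
        have e1 : (⟨((i.succ : Fin (k'+1)) : ℕ) - 1,
            Nat.lt_of_le_of_lt (Nat.sub_le _ _) (i.succ : Fin (k'+1)).isLt⟩ : Fin (k'+1))
            = i.castSucc := by ext; simp
        rw [tau, if_pos h1, e1, Iio_succ']
      rw [htau]
      field_simp
      ring

lemma chainB {k : ℕ} (v xh u : Fin k → ℝ) (hIR : ∀ t, 0 ≤ u t)
    (hstep : ∀ (t : Fin k) (h : (t : ℕ) + 1 < k),
      u t + (v ⟨(t : ℕ) + 1, h⟩ - v t) * xh t ≤ u ⟨(t : ℕ) + 1, h⟩)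
    (l : Fin k) : ∑ t ∈ Finset.Iio l, (vnext v t - v t) * xh t ≤ u l := by
  have hk := l.pos
  obtain ⟨k', rfl⟩ : ∃ k', k = k' + 1 := ⟨k - 1, by omega⟩
  induction l using Fin.induction with
  | zero => rw [Iio_zero']; simpa using hIR 0
  | succ i ih =>
      rw [Iio_succ_ins', Finset.sum_insert (not_mem_Iio_self _)]
      have h1 : ((i.castSucc : ℕ) + 1) < k' + 1 := by
        simp only [Fin.coe_castSucc]; omega
      have hv : vnext v i.castSucc = v i.succ := by
        rw [vnext, dif_pos h1]
        apply congrArg v; ext; simp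
      have h2 := hstep i.castSucc h1
      have h3 : (⟨(i.castSucc : ℕ) + 1, h1⟩ : Fin (k'+1)) = i.succ := by ext; simp
      rw [h3] at h2
      rw [hv]
      linarith

lemma chainS {k : ℕ} (v xh u : Fin k → ℝ) (hIR : ∀ t, 0 ≤ u t)
    (hstep : ∀ (t : Fin k) (h : 0 < (t : ℕ)),
      u t + (v t - v ⟨(t : ℕ) - 1, Nat.lt_of_le_of_lt (Nat.sub_le _ _) t.isLt⟩) * xh t
        ≤ u ⟨(t : ℕ) - 1, Nat.lt_of_le_of_lt (Nat.sub_le _ _) t.isLt⟩)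
    (l : Fin k) : ∑ t ∈ Finset.Ioi l, (v t - vprev v t) * xh t ≤ u l := by
  have hk := l.pos
  obtain ⟨k', rfl⟩ : ∃ k', k = k' + 1 := ⟨k - 1, by omega⟩
  induction l using Fin.reverseInduction with
  | last => rw [Ioi_last']; simpa using hIR (Fin.last k')
  | cast i ih =>
      rw [Ioi_castSucc_ins', Finset.sum_insert (not_mem_Ioi_self _)]
      have h1 : 0 < ((i.succ : ℕ)) := by simp
      have hv : vprev v i.succ = v i.castSucc := by
        rw [vprev, if_pos h1]
        apply congrArg v; ext; simp
      have h2 := hstep i.succ h1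
      have h3 : (⟨(i.succ : ℕ) - 1, Nat.lt_of_le_of_lt (Nat.sub_le _ _) i.succ.isLt⟩ : Fin (k'+1))
          = i.castSucc := by ext; simp
      rw [h3] at h2
      rw [hv]
      linarith

lemma sum_Ioi_swap {k : ℕ} (Fn : Fin k → Fin k → ℝ) :
    ∑ t, ∑ l ∈ Finset.Ioi t, Fn t l = ∑ l, ∑ t ∈ Finset.Iio l, Fn t l := by
  have h1 : ∀ t : Fin k, Finset.Ioi t = Finset.univ.filter (fun l => t < l) := by
    intro t; ext; simp
  have h2 : ∀ l : Fin k, Finset.Iio l = Finset.univ.filter (fun t => t < l) := by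
    intro l; ext; simp
  simp_rw [h1, h2, Finset.sum_filter]
  exact Finset.sum_comm

end Chains
section Split

variable {ι : Type*} [Fintype ι] [DecidableEq ι] {κ : ι → ℕ}

omit [Fintype ι] in
lemma piSplit_symm_self (i : ι) (t : Fin (κ i))
    (q : ∀ j : {j // j ≠ i}, Fin (κ j)) :
    (Equiv.piSplitAt i (fun j => Fin (κ j))).symm (t, q) i = t := by
  simp [Equiv.piSplitAt_symm_apply]

omit [Fintype ι] in
lemma piSplit_symm_ne (i : ι) (t : Fin (κ i))
    (q : ∀ j : {j // j ≠ i}, Fin (κ j)) (j : ι) (h : j ≠ i) :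
    (Equiv.piSplitAt i (fun j => Fin (κ j))).symm (t, q) j = q ⟨j, h⟩ := by
  simp [Equiv.piSplitAt_symm_apply, h]

omit [Fintype ι] in
lemma piSplit_update (i : ι) (u t : Fin (κ i))
    (q : ∀ j : {j // j ≠ i}, Fin (κ j)) :
    Function.update ((Equiv.piSplitAt i (fun j => Fin (κ j))).symm (u, q)) i t
      = (Equiv.piSplitAt i (fun j => Fin (κ j))).symm (t, q) := by
  funext j
  by_cases h : j = i
  · subst h
    rw [Function.update_self, piSplit_symm_self]
  · rw [Function.update_of_ne h, piSplit_symm_ne i u q j h, piSplit_symm_ne i t q j h]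

lemma sum_update_pi (w : ∀ i, Fin (κ i) → ℝ) (hw1 : ∀ i, ∑ t, w i t = 1)
    (i : ι) (H : (∀ j, Fin (κ j)) → ℝ) :
    ∑ b, (∏ j, w j (b j)) * H b
      = ∑ b, (∏ j, w j (b j)) * ∑ t, w i t * H (Function.update b i t) := by
  classical
  set e := Equiv.piSplitAt i (fun j => Fin (κ j)) with he
  set D : (∀ j : {j // j ≠ i}, Fin (κ (j : ι))) → ℝ := fun q => ∏ j : {j // j ≠ i}, w (j : ι) (q j) with hD
  have hsplit : ∀ b : ∀ j, Fin (κ j), (∏ j, w j (b j)) = w i (b i) * D (fun j => b ↑j) := by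
    intro b
    rw [hD]
    rw [← Finset.mul_prod_erase Finset.univ _ (Finset.mem_univ i)]
    congr 1
    exact Finset.prod_subtype (Finset.univ.erase i) (by simp) (fun j => w j (b j))
  have key : ∀ G : (∀ j, Fin (κ j)) → ℝ,
      ∑ b, (∏ j, w j (b j)) * G b
        = ∑ q, D q * ∑ t, w i t * G (e.symm (t, q)) := by
    intro G
    rw [← Equiv.sum_comp e.symm (fun b => (∏ j, w j (b j)) * G b)]
    rw [Fintype.sum_prod_type]
    rw [Finset.sum_comm]
    apply Finset.sum_congr rfl
    intro q _
    rw [Finset.mul_sum]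
    apply Finset.sum_congr rfl
    intro t _
    rw [hsplit (e.symm (t, q))]
    rw [show ((e.symm (t, q) : ∀ j, Fin (κ j)) i) = t from piSplit_symm_self i t q]
    rw [show (fun (j : {j // j ≠ i}) => (e.symm (t, q) : ∀ j, Fin (κ j)) ↑j) = q from
      funext (fun j => piSplit_symm_ne i t q ↑j j.2)]
    ring
  rw [key H, key (fun b => ∑ t, w i t * H (Function.update b i t))]
  apply Finset.sum_congr rfl
  intro q _
  congr 1
  have hupd : ∀ t t' : Fin (κ i),
      Function.update (e.symm (t, q) : ∀ j, Fin (κ j)) i t' = e.symm (t', q) :=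
    fun t t' => piSplit_update i t t' q
  symm
  calc ∑ t, w i t * ∑ t', w i t' * H (Function.update (e.symm (t, q) : ∀ j, Fin (κ j)) i t')
      = ∑ t, w i t * ∑ t', w i t' * H (e.symm (t', q)) :=
        Finset.sum_congr rfl (fun t _ => by
          congr 1
          exact Finset.sum_congr rfl (fun t' _ => by rw [hupd t t']))
    _ = (∑ t, w i t) * ∑ t', w i t' * H (e.symm (t', q)) := by rw [← Finset.sum_mul]
    _ = ∑ t', w i t' * H (e.symm (t', q)) := by rw [hw1 i, one_mul]

end Split
section ExLemmas

variable {n m : ℕ} {K : Fin n → ℕ} {K' : Fin m → ℕ}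
variable (f : ∀ i, Fin (K i) → ℝ) (g : ∀ j, Fin (K' j) → ℝ)

lemma Ex_eq (h : ProfileB K → ProfileS K' → ℝ) :
    Ex f g h = ∑ b, (∏ i, f i (b i)) * ∑ s, (∏ j, g j (s j)) * h b s := by
  unfold Ex
  exact Finset.sum_congr rfl fun b _ => by
    rw [Finset.mul_sum]
    exact Finset.sum_congr rfl fun s _ => mul_assoc _ _ _

lemma Ex_eq' (h : ProfileB K → ProfileS K' → ℝ) :
    Ex f g h = ∑ s, (∏ j, g j (s j)) * ∑ b, (∏ i, f i (b i)) * h b s := by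
  unfold Ex
  rw [Finset.sum_comm]
  exact Finset.sum_congr rfl fun s _ => by
    rw [Finset.mul_sum]
    exact Finset.sum_congr rfl fun b _ => by ring

lemma Ex_add (h₁ h₂ : ProfileB K → ProfileS K' → ℝ) :
    Ex f g (fun b s => h₁ b s + h₂ b s) = Ex f g h₁ + Ex f g h₂ := by
  unfold Ex
  rw [← Finset.sum_add_distrib]
  exact Finset.sum_congr rfl fun b _ => by
    rw [← Finset.sum_add_distrib]
    exact Finset.sum_congr rfl fun s _ => by ring

lemma Ex_sub (h₁ h₂ : ProfileB K → ProfileS K' → ℝ) :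
    Ex f g (fun b s => h₁ b s - h₂ b s) = Ex f g h₁ - Ex f g h₂ := by
  unfold Ex
  rw [← Finset.sum_sub_distrib]
  exact Finset.sum_congr rfl fun b _ => by
    rw [← Finset.sum_sub_distrib]
    exact Finset.sum_congr rfl fun s _ => by ring

lemma Ex_smul (c : ℝ) (h : ProfileB K → ProfileS K' → ℝ) :
    Ex f g (fun b s => c * h b s) = c * Ex f g h := by
  unfold Ex
  rw [Finset.mul_sum]
  exact Finset.sum_congr rfl fun b _ => by
    rw [Finset.mul_sum]
    exact Finset.sum_congr rfl fun s _ => by ring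

lemma Ex_sum {α : Type*} (A : Finset α) (h : α → ProfileB K → ProfileS K' → ℝ) :
    Ex f g (fun b s => ∑ a ∈ A, h a b s) = ∑ a ∈ A, Ex f g (h a) := by
  classical
  induction A using Finset.induction_on with
  | empty => simp [Ex]
  | insert _ _ hnx ih =>
      rw [Finset.sum_insert hnx, ← ih, ← Ex_add]
      congr 1
      funext b s
      rw [Finset.sum_insert hnx]

lemma Ex_mono (hf : ∀ i t, 0 < f i t) (hg : ∀ j t, 0 < g j t)
    {h h' : ProfileB K → ProfileS K' → ℝ} (hle : ∀ b s, h b s ≤ h' b s) :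
    Ex f g h ≤ Ex f g h' := by
  unfold Ex
  apply Finset.sum_le_sum
  intro b _
  apply Finset.sum_le_sum
  intro s _
  apply mul_le_mul_of_nonneg_left (hle b s)
  exact mul_nonneg (Finset.prod_nonneg fun i _ => (hf i (b i)).le)
    (Finset.prod_nonneg fun j _ => (hg j (s j)).le)

lemma Ex_updateB (hf1 : ∀ i, ∑ t, f i t = 1) (i : Fin n)
    (H : ProfileB K → ProfileS K' → ℝ) :
    Ex f g H = Ex f g (fun b s => ∑ t, f i t * H (Function.update b i t) s) := by
  rw [Ex_eq, Ex_eq]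
  rw [sum_update_pi f hf1 i (fun b => ∑ s, (∏ j, g j (s j)) * H b s)]
  apply Finset.sum_congr rfl
  intro b _
  congr 1
  calc ∑ t, f i t * ∑ s, (∏ j, g j (s j)) * H (Function.update b i t) s
      = ∑ t, ∑ s, f i t * ((∏ j, g j (s j)) * H (Function.update b i t) s) :=
        Finset.sum_congr rfl fun t _ => Finset.mul_sum _ _ _
    _ = ∑ s, ∑ t, f i t * ((∏ j, g j (s j)) * H (Function.update b i t) s) :=
        Finset.sum_comm
    _ = ∑ s, (∏ j, g j (s j)) * ∑ t, f i t * H (Function.update b i t) s := by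
        refine Finset.sum_congr rfl fun s _ => ?_
        rw [Finset.mul_sum]
        exact Finset.sum_congr rfl fun t _ => by ring

lemma Ex_updateS (hg1 : ∀ j, ∑ t, g j t = 1) (j : Fin m)
    (H : ProfileB K → ProfileS K' → ℝ) :
    Ex f g H = Ex f g (fun b s => ∑ t, g j t * H b (Function.update s j t)) := by
  rw [Ex_eq', Ex_eq']
  rw [sum_update_pi g hg1 j (fun s => ∑ b, (∏ i, f i (b i)) * H b s)]
  apply Finset.sum_congr rfl
  intro s _
  congr 1
  calc ∑ t, g j t * ∑ b, (∏ i, f i (b i)) * H b (Function.update s j t)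
      = ∑ t, ∑ b, g j t * ((∏ i, f i (b i)) * H b (Function.update s j t)) :=
        Finset.sum_congr rfl fun t _ => Finset.mul_sum _ _ _
    _ = ∑ b, ∑ t, g j t * ((∏ i, f i (b i)) * H b (Function.update s j t)) :=
        Finset.sum_comm
    _ = ∑ b, (∏ i, f i (b i)) * ∑ t, g j t * H b (Function.update s j t) := by
        refine Finset.sum_congr rfl fun b _ => ?_
        rw [Finset.mul_sum]
        exact Finset.sum_congr rfl fun t _ => by ring

end ExLemmas
section Selection

variable {n m : ℕ}

lemma exists_argmax (F : Set (Finset (Fin n × Fin m))) (hFne : F.Nonempty)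
    (wt : Fin n × Fin m → ℝ) :
    ∃ M, M ∈ F ∧ ∀ N ∈ F, (∑ e ∈ N, wt e) ≤ ∑ e ∈ M, wt e := by
  classical
  obtain ⟨Mx, hMx, hmax⟩ := Finset.exists_max_image
    (Set.Finite.toFinset (Set.toFinite F)) (fun M => ∑ e ∈ M, wt e)
    (by
      obtain ⟨M, hM⟩ := hFne
      exact ⟨M, (Set.Finite.mem_toFinset _).mpr hM⟩)
  exact ⟨Mx, (Set.Finite.mem_toFinset _).mp hMx,
    fun N hN => hmax N ((Set.Finite.mem_toFinset _).mpr hN)⟩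

/-- deterministic selection of a maximum-weight feasible matching -/
noncomputable def Fsel (F : Set (Finset (Fin n × Fin m))) (hFne : F.Nonempty)
    (wt : Fin n × Fin m → ℝ) : Finset (Fin n × Fin m) :=
  (exists_argmax F hFne wt).choose

lemma Fsel_mem (F : Set (Finset (Fin n × Fin m))) (hFne : F.Nonempty)
    (wt : Fin n × Fin m → ℝ) : Fsel F hFne wt ∈ F :=
  (exists_argmax F hFne wt).choose_spec.1

lemma Fsel_opt (F : Set (Finset (Fin n × Fin m))) (hFne : F.Nonempty)
    (wt : Fin n × Fin m → ℝ) : ∀ N ∈ F, (∑ e ∈ N, wt e) ≤ ∑ e ∈ Fsel F hFne wt, wt e :=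
  (exists_argmax F hFne wt).choose_spec.2

lemma sum_ite_marked {M : Finset (Fin n × Fin m)} {P : Fin n × Fin m → Prop}
    [DecidablePred P]
    (huniq : ∀ e ∈ M, ∀ e' ∈ M, P e → P e' → e = e') {e₀ : Fin n × Fin m}
    (he₀ : e₀ ∈ M) (hP₀ : P e₀) (c : ℝ) :
    ∑ e ∈ M, (if P e then c else 0) = c := by
  have hfil : M.filter P = {e₀} := by
    ext e
    simp only [Finset.mem_filter, Finset.mem_singleton]
    constructor
    · rintro ⟨he, hPe⟩; exact huniq e he e₀ he₀ hPe hP₀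
    · rintro rfl; exact ⟨he₀, hP₀⟩
  rw [← Finset.sum_filter, hfil, Finset.sum_singleton]

lemma Fsel_edge_nonneg (F : Set (Finset (Fin n × Fin m))) (hFne : F.Nonempty)
    (hdc : ∀ M ∈ F, ∀ M' ⊆ M, M' ∈ F)
    (wt : Fin n × Fin m → ℝ) {e : Fin n × Fin m} (he : e ∈ Fsel F hFne wt) :
    0 ≤ wt e := by
  have hNF : (Fsel F hFne wt).erase e ∈ F :=
    hdc _ (Fsel_mem F hFne wt) _ (Finset.erase_subset _ _)
  have h1 := Fsel_opt F hFne wt _ hNF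
  rw [Finset.sum_erase_eq_sub he] at h1
  linarith

lemma Fsel_mono (F : Set (Finset (Fin n × Fin m))) (hFne : F.Nonempty)
    (wt wt' : Fin n × Fin m → ℝ) (δ : ℝ) (hδ : 0 ≤ δ) (P : Fin n × Fin m → Prop)
    [DecidablePred P]
    (hP : ∀ M ∈ F, ∀ e ∈ M, ∀ e' ∈ M, P e → P e' → e = e')
    (hrow : ∀ e, wt' e = wt e + if P e then δ else 0)
    (hcov : ∃ e ∈ Fsel F hFne wt, P e) : ∃ e ∈ Fsel F hFne wt', P e := by
  by_contra hnc
  push_neg at hnc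
  obtain ⟨e₀, he₀M, hPe₀⟩ := hcov
  set M := Fsel F hFne wt with hM
  set M' := Fsel F hFne wt' with hM'
  have h1 : ∑ e ∈ M', wt' e = ∑ e ∈ M', wt e :=
    Finset.sum_congr rfl fun e he => by rw [hrow, if_neg (hnc e he), add_zero]
  have h2 : ∑ e ∈ M, wt' e = (∑ e ∈ M, wt e) + δ := by
    calc ∑ e ∈ M, wt' e = ∑ e ∈ M, (wt e + if P e then δ else 0) :=
          Finset.sum_congr rfl fun e _ => hrow e
      _ = (∑ e ∈ M, wt e) + ∑ e ∈ M, (if P e then δ else 0) := Finset.sum_add_distrib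
      _ = (∑ e ∈ M, wt e) + δ := by
          rw [sum_ite_marked (hP M (Fsel_mem F hFne wt)) he₀M hPe₀]
  have h3 := Fsel_opt F hFne wt' M (Fsel_mem F hFne wt)
  have h4 := Fsel_opt F hFne wt M' (Fsel_mem F hFne wt')
  have hδ0 : δ = 0 := by rw [← hM'] at h3; rw [← hM] at h4; linarith
  have hwteq : wt' = wt := funext fun e => by rw [hrow]; split <;> simp [hδ0]
  have : M' = M := by rw [hM', hM, hwteq]
  exact hnc e₀ (this ▸ he₀M) hPe₀

lemma Fsel_threshold (F : Set (Finset (Fin n × Fin m))) (hFne : F.Nonempty)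
    (hdc : ∀ M ∈ F, ∀ M' ⊆ M, M' ∈ F)
    (wt wt' : Fin n × Fin m → ℝ) (c : ℝ) (P : Fin n × Fin m → Prop)
    [DecidablePred P]
    (hP : ∀ M ∈ F, ∀ e ∈ M, ∀ e' ∈ M, P e → P e' → e = e')
    (hrow : ∀ e, wt' e = wt e + if P e then c else 0)
    {e₀ : Fin n × Fin m} (he₀ : e₀ ∈ Fsel F hFne wt) (hPe₀ : P e₀)
    (hcov' : ∃ e ∈ Fsel F hFne wt', P e) : 0 ≤ wt e₀ + c := by
  set M := Fsel F hFne wt with hM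
  set M' := Fsel F hFne wt' with hM'
  set N := M.filter (fun e => ¬ P e) with hN
  have hNF : N ∈ F := hdc M (Fsel_mem F hFne wt) N (Finset.filter_subset _ _)
  have hsplitM : ∑ e ∈ M, wt e = wt e₀ + (∑ e ∈ N, wt e) := by
    rw [hN, ← Finset.sum_filter_add_sum_filter_not M P wt]
    congr 1
    have hfil : M.filter P = {e₀} := by
      ext e
      simp only [Finset.mem_filter, Finset.mem_singleton]
      constructor
      · rintro ⟨he, hPe⟩; exact hP M (Fsel_mem F hFne wt) e he e₀ he₀ hPe hPe₀
      · rintro rfl; exact ⟨he₀, hPe₀⟩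
    rw [hfil, Finset.sum_singleton]
  obtain ⟨e₁, he₁, hPe₁⟩ := hcov'
  have h1 : ∑ e ∈ N, wt' e = ∑ e ∈ N, wt e :=
    Finset.sum_congr rfl fun e he => by
      rw [hrow, if_neg (Finset.mem_filter.mp he).2, add_zero]
  have h2 : ∑ e ∈ M', wt' e = (∑ e ∈ M', wt e) + c := by
    calc ∑ e ∈ M', wt' e = ∑ e ∈ M', (wt e + if P e then c else 0) :=
          Finset.sum_congr rfl fun e _ => hrow e
      _ = (∑ e ∈ M', wt e) + ∑ e ∈ M', (if P e then c else 0) := Finset.sum_add_distrib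
      _ = (∑ e ∈ M', wt e) + c := by
          rw [sum_ite_marked (hP M' (Fsel_mem F hFne wt')) he₁ hPe₁]
  have h3 := Fsel_opt F hFne wt' N hNF
  have h4 := Fsel_opt F hFne wt M' (Fsel_mem F hFne wt')
  rw [← hM'] at h3
  rw [← hM] at h4
  linarith

end Selection
section Helpers

lemma upclosed_eq_Ici {k : ℕ} (W : Finset (Fin k))
    (hup : ∀ t t', t ∈ W → t ≤ t' → t' ∈ W) (hne : W.Nonempty) :
    W = Finset.Ici (W.min' hne) := by
  ext t
  simp only [Finset.mem_Ici]
  exact ⟨fun h => W.min'_le t h, fun h => hup _ _ (W.min'_mem hne) h⟩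

lemma downclosed_eq_Iic {k : ℕ} (W : Finset (Fin k))
    (hdn : ∀ t t', t ∈ W → t' ≤ t → t' ∈ W) (hne : W.Nonempty) :
    W = Finset.Iic (W.max' hne) := by
  ext t
  simp only [Finset.mem_Iic]
  exact ⟨fun h => W.le_max' t h, fun h => hdn _ _ (W.max'_mem hne) h⟩

variable {n m : ℕ}

lemma row_unique (F : Set (Finset (Fin n × Fin m)))
    (hmatch : ∀ M ∈ F, ∀ e ∈ M, ∀ e' ∈ M, e ≠ e' → e.1 ≠ e'.1 ∧ e.2 ≠ e'.2)
    {M : Finset (Fin n × Fin m)} (hM : M ∈ F) (i : Fin n) :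
    ∀ e ∈ M, ∀ e' ∈ M, e.1 = i → e'.1 = i → e = e' := by
  intro e he e' he' h1 h2
  by_contra hne
  exact (hmatch M hM e he e' he' hne).1 (h1.trans h2.symm)

lemma col_unique (F : Set (Finset (Fin n × Fin m)))
    (hmatch : ∀ M ∈ F, ∀ e ∈ M, ∀ e' ∈ M, e ≠ e' → e.1 ≠ e'.1 ∧ e.2 ≠ e'.2)
    {M : Finset (Fin n × Fin m)} (hM : M ∈ F) (j : Fin m) :
    ∀ e ∈ M, ∀ e' ∈ M, e.2 = j → e'.2 = j → e = e' := by
  intro e he e' he' h1 h2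
  by_contra hne
  exact (hmatch M hM e he e' he' hne).2 (h1.trans h2.symm)

lemma row_filter_eq {M : Finset (Fin n × Fin m)} {i : Fin n}
    (huniq : ∀ e ∈ M, ∀ e' ∈ M, e.1 = i → e'.1 = i → e = e')
    {j₀ : Fin m} (hj₀ : (i, j₀) ∈ M) :
    M.filter (fun e => e.1 = i) = {(i, j₀)} := by
  ext e
  simp only [Finset.mem_filter, Finset.mem_singleton]
  constructor
  · rintro ⟨he, hPe⟩; exact huniq e he (i, j₀) hj₀ hPe rfl
  · rintro rfl; exact ⟨hj₀, rfl⟩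

lemma col_filter_eq {M : Finset (Fin n × Fin m)} {j : Fin m}
    (huniq : ∀ e ∈ M, ∀ e' ∈ M, e.2 = j → e'.2 = j → e = e')
    {i₀ : Fin n} (hi₀ : (i₀, j) ∈ M) :
    M.filter (fun e => e.2 = j) = {(i₀, j)} := by
  ext e
  simp only [Finset.mem_filter, Finset.mem_singleton]
  constructor
  · rintro ⟨he, hPe⟩; exact huniq e he (i₀, j) hi₀ hPe rfl
  · rintro rfl; exact ⟨hi₀, rfl⟩

lemma row_filter_empty {M : Finset (Fin n × Fin m)} {i : Fin n}
    (hnc : ¬ ∃ j, (i, j) ∈ M) :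
    M.filter (fun e => e.1 = i) = ∅ := by
  ext e
  simp only [Finset.mem_filter, Finset.notMem_empty, iff_false, not_and]
  intro he h1
  exact hnc ⟨e.2, by rwa [← h1, Prod.mk.eta]⟩

lemma col_filter_empty {M : Finset (Fin n × Fin m)} {j : Fin m}
    (hnc : ¬ ∃ i, (i, j) ∈ M) :
    M.filter (fun e => e.2 = j) = ∅ := by
  ext e
  simp only [Finset.mem_filter, Finset.notMem_empty, iff_false, not_and]
  intro he h1
  exact hnc ⟨e.1, by rwa [← h1, Prod.mk.eta]⟩

lemma sum_row_indicator {M : Finset (Fin n × Fin m)}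
    (huniq : ∀ i : Fin n, ∀ e ∈ M, ∀ e' ∈ M, e.1 = i → e'.1 = i → e = e')
    (h : Fin n → ℝ) :
    ∑ i, (if ∃ j, (i, j) ∈ M then h i else 0) = ∑ e ∈ M, h e.1 := by
  classical
  rw [← Finset.sum_fiberwise M (fun e => e.1) (fun e => h e.1)]
  apply Finset.sum_congr rfl
  intro i _
  by_cases hc : ∃ j, (i, j) ∈ M
  · obtain ⟨j₀, hj₀⟩ := hc
    rw [if_pos ⟨j₀, hj₀⟩, row_filter_eq (huniq i) hj₀, Finset.sum_singleton]
  · rw [if_neg hc, row_filter_empty hc, Finset.sum_empty]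

lemma sum_col_indicator {M : Finset (Fin n × Fin m)}
    (huniq : ∀ j : Fin m, ∀ e ∈ M, ∀ e' ∈ M, e.2 = j → e'.2 = j → e = e')
    (h : Fin m → ℝ) :
    ∑ j, (if ∃ i, (i, j) ∈ M then h j else 0) = ∑ e ∈ M, h e.2 := by
  classical
  rw [← Finset.sum_fiberwise M (fun e => e.2) (fun e => h e.2)]
  apply Finset.sum_congr rfl
  intro j _
  by_cases hc : ∃ i, (i, j) ∈ M
  · obtain ⟨i₀, hi₀⟩ := hc
    rw [if_pos ⟨i₀, hi₀⟩, col_filter_eq (huniq j) hi₀, Finset.sum_singleton]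
  · rw [if_neg hc, col_filter_empty hc, Finset.sum_empty]

end Helpers
section Mechanism

variable {n m : ℕ} {K : Fin n → ℕ} {K' : Fin m → ℕ}
variable (vB : ∀ i, Fin (K i) → ℝ) (vS : ∀ j, Fin (K' j) → ℝ)
variable (VB : ∀ i, Fin (K i) → ℝ) (VS : ∀ j, Fin (K' j) → ℝ)
variable (F : Set (Finset (Fin n × Fin m))) (hFne : F.Nonempty)

/-- edge weights used by the mechanism -/
noncomputable def mwt (b : ProfileB K) (s : ProfileS K') : Fin n × Fin m → ℝ :=
  fun e => VB e.1 (b e.1) - VS e.2 (s e.2)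

/-- mechanism allocation -/
noncomputable def mX (b : ProfileB K) (s : ProfileS K') : Finset (Fin n × Fin m) :=
  Fsel F hFne (mwt VB VS b s)

/-- winning reports for buyer `i` -/
noncomputable def mWB (i : Fin n) (b : ProfileB K) (s : ProfileS K') : Finset (Fin (K i)) :=
  Finset.univ.filter (fun t => ∃ j, (i, j) ∈ mX VB VS F hFne (Function.update b i t) s)

/-- winning reports for seller `j` -/
noncomputable def mWS (j : Fin m) (b : ProfileB K) (s : ProfileS K') : Finset (Fin (K' j)) :=
  Finset.univ.filter (fun t => ∃ i, (i, j) ∈ mX VB VS F hFne b (Function.update s j t))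

/-- buyer threshold payment -/
noncomputable def mpB (i : Fin n) (b : ProfileB K) (s : ProfileS K') : ℝ :=
  if h : b i ∈ mWB VB VS F hFne i b s then
    vB i ((mWB VB VS F hFne i b s).min' ⟨_, h⟩) else 0

/-- seller threshold payment -/
noncomputable def mpS (j : Fin m) (b : ProfileB K) (s : ProfileS K') : ℝ :=
  if h : s j ∈ mWS VB VS F hFne j b s then
    vS j ((mWS VB VS F hFne j b s).max' ⟨_, h⟩) else 0

lemma mX_mem (b : ProfileB K) (s : ProfileS K') : mX VB VS F hFne b s ∈ F :=
  Fsel_mem F hFne _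

lemma mem_mWB {i : Fin n} {b : ProfileB K} {s : ProfileS K'} {t : Fin (K i)} :
    t ∈ mWB VB VS F hFne i b s ↔ ∃ j, (i, j) ∈ mX VB VS F hFne (Function.update b i t) s := by
  simp [mWB]

lemma self_mem_mWB {i : Fin n} {b : ProfileB K} {s : ProfileS K'} :
    b i ∈ mWB VB VS F hFne i b s ↔ ∃ j, (i, j) ∈ mX VB VS F hFne b s := by
  rw [mem_mWB, Function.update_eq_self]

lemma mWB_update (i : Fin n) (b : ProfileB K) (s : ProfileS K') (t : Fin (K i)) :
    mWB VB VS F hFne i (Function.update b i t) s = mWB VB VS F hFne i b s := by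
  unfold mWB
  simp only [Function.update_idem]

lemma mem_mWS {j : Fin m} {b : ProfileB K} {s : ProfileS K'} {t : Fin (K' j)} :
    t ∈ mWS VB VS F hFne j b s ↔ ∃ i, (i, j) ∈ mX VB VS F hFne b (Function.update s j t) := by
  simp [mWS]

lemma self_mem_mWS {j : Fin m} {b : ProfileB K} {s : ProfileS K'} :
    s j ∈ mWS VB VS F hFne j b s ↔ ∃ i, (i, j) ∈ mX VB VS F hFne b s := by
  rw [mem_mWS, Function.update_eq_self]

lemma mWS_update (j : Fin m) (b : ProfileB K) (s : ProfileS K') (t : Fin (K' j)) :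
    mWS VB VS F hFne j b (Function.update s j t) = mWS VB VS F hFne j b s := by
  unfold mWS
  simp only [Function.update_idem]

lemma detXB_mX (i : Fin n) (b : ProfileB K) (s : ProfileS K') :
    detXB (mX VB VS F hFne) i b s
      = if b i ∈ mWB VB VS F hFne i b s then (1 : ℝ) else 0 := by
  rw [detXB]
  by_cases h : ∃ j, (i, j) ∈ mX VB VS F hFne b s
  · rw [if_pos h, if_pos ((self_mem_mWB VB VS F hFne).mpr h)]
  · rw [if_neg h, if_neg (fun hc => h ((self_mem_mWB VB VS F hFne).mp hc))]

lemma detXS_mX (j : Fin m) (b : ProfileB K) (s : ProfileS K') :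
    detXS (mX VB VS F hFne) j b s
      = if s j ∈ mWS VB VS F hFne j b s then (1 : ℝ) else 0 := by
  rw [detXS]
  by_cases h : ∃ i, (i, j) ∈ mX VB VS F hFne b s
  · rw [if_pos h, if_pos ((self_mem_mWS VB VS F hFne).mpr h)]
  · rw [if_neg h, if_neg (fun hc => h ((self_mem_mWS VB VS F hFne).mp hc))]

lemma mWB_upclosed
    (hdc : ∀ M ∈ F, ∀ M' ⊆ M, M' ∈ F)
    (hmatch : ∀ M ∈ F, ∀ e ∈ M, ∀ e' ∈ M, e ≠ e' → e.1 ≠ e'.1 ∧ e.2 ≠ e'.2)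
    (hVBmono : ∀ i, Monotone (VB i))
    (i : Fin n) (b : ProfileB K) (s : ProfileS K') :
    ∀ t t', t ∈ mWB VB VS F hFne i b s → t ≤ t' → t' ∈ mWB VB VS F hFne i b s := by
  intro t t' ht htt'
  rw [mem_mWB] at ht ⊢
  have hcov : ∃ e ∈ Fsel F hFne (mwt VB VS (Function.update b i t) s), e.1 = i := by
    obtain ⟨j, hj⟩ := ht
    exact ⟨(i, j), hj, rfl⟩
  have hcov' := Fsel_mono F hFne
    (mwt VB VS (Function.update b i t) s) (mwt VB VS (Function.update b i t') s)
    (VB i t' - VB i t) (by have := hVBmono i htt'; linarith)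
    (fun e => e.1 = i) (fun M hM => row_unique F hmatch hM i)
    (fun e => by
      by_cases h : e.1 = i
      · rw [if_pos h]
        subst h
        unfold mwt
        rw [Function.update_self, Function.update_self]
        ring
      · rw [if_neg h]
        unfold mwt
        rw [Function.update_of_ne h, Function.update_of_ne h, add_zero])
    hcov
  obtain ⟨⟨i', j⟩, he, hei⟩ := hcov'
  simp only at hei
  subst hei
  exact ⟨j, he⟩

lemma mWS_downclosed
    (hdc : ∀ M ∈ F, ∀ M' ⊆ M, M' ∈ F)
    (hmatch : ∀ M ∈ F, ∀ e ∈ M, ∀ e' ∈ M, e ≠ e' → e.1 ≠ e'.1 ∧ e.2 ≠ e'.2)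
    (hVSmono : ∀ j, Monotone (VS j))
    (j : Fin m) (b : ProfileB K) (s : ProfileS K') :
    ∀ t t', t ∈ mWS VB VS F hFne j b s → t' ≤ t → t' ∈ mWS VB VS F hFne j b s := by
  intro t t' ht ht't
  rw [mem_mWS] at ht ⊢
  have hcov : ∃ e ∈ Fsel F hFne (mwt VB VS b (Function.update s j t)), e.2 = j := by
    obtain ⟨i, hi⟩ := ht
    exact ⟨(i, j), hi, rfl⟩
  have hcov' := Fsel_mono F hFne
    (mwt VB VS b (Function.update s j t)) (mwt VB VS b (Function.update s j t'))
    (VS j t - VS j t') (by have := hVSmono j ht't; linarith)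
    (fun e => e.2 = j) (fun M hM => col_unique F hmatch hM j)
    (fun e => by
      by_cases h : e.2 = j
      · rw [if_pos h]
        subst h
        unfold mwt
        rw [Function.update_self, Function.update_self]
        ring
      · rw [if_neg h]
        unfold mwt
        rw [Function.update_of_ne h, Function.update_of_ne h, add_zero])
    hcov
  obtain ⟨⟨i, j'⟩, he, hej⟩ := hcov'
  simp only at hej
  subst hej
  exact ⟨i, he⟩

end Mechanism
section Mechanism2

variable {n m : ℕ} {K : Fin n → ℕ} {K' : Fin m → ℕ}
variable (vB : ∀ i, Fin (K i) → ℝ) (vS : ∀ j, Fin (K' j) → ℝ)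
variable (VB : ∀ i, Fin (K i) → ℝ) (VS : ∀ j, Fin (K' j) → ℝ)
variable (F : Set (Finset (Fin n × Fin m))) (hFne : F.Nonempty)

lemma detXB_mX_update (i : Fin n) (b : ProfileB K) (s : ProfileS K') (t' : Fin (K i)) :
    detXB (mX VB VS F hFne) i (Function.update b i t') s
      = if t' ∈ mWB VB VS F hFne i b s then (1 : ℝ) else 0 := by
  rw [detXB_mX]
  simp only [Function.update_self, mWB_update]

lemma detXS_mX_update (j : Fin m) (b : ProfileB K) (s : ProfileS K') (t' : Fin (K' j)) :
    detXS (mX VB VS F hFne) j b (Function.update s j t')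
      = if t' ∈ mWS VB VS F hFne j b s then (1 : ℝ) else 0 := by
  rw [detXS_mX]
  simp only [Function.update_self, mWS_update]

lemma mpB_update (i : Fin n) (b : ProfileB K) (s : ProfileS K') (t' : Fin (K i)) :
    mpB vB VB VS F hFne i (Function.update b i t') s
      = if h : t' ∈ mWB VB VS F hFne i b s then
          vB i ((mWB VB VS F hFne i b s).min' ⟨_, h⟩) else 0 := by
  unfold mpB
  simp only [Function.update_self, mWB_update]

lemma mpS_update (j : Fin m) (b : ProfileB K) (s : ProfileS K') (t' : Fin (K' j)) :
    mpS vS VB VS F hFne j b (Function.update s j t')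
      = if h : t' ∈ mWS VB VS F hFne j b s then
          vS j ((mWS VB VS F hFne j b s).max' ⟨_, h⟩) else 0 := by
  unfold mpS
  simp only [Function.update_self, mWS_update]

lemma DSIC_B
    (hdc : ∀ M ∈ F, ∀ M' ⊆ M, M' ∈ F)
    (hmatch : ∀ M ∈ F, ∀ e ∈ M, ∀ e' ∈ M, e ≠ e' → e.1 ≠ e'.1 ∧ e.2 ≠ e'.2)
    (hVBmono : ∀ i, Monotone (VB i)) (hvB : ∀ i, StrictMono (vB i))
    (i : Fin n) (b : ProfileB K) (s : ProfileS K') (t' : Fin (K i)) :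
    vB i (b i) * detXB (mX VB VS F hFne) i (Function.update b i t') s
        - mpB vB VB VS F hFne i (Function.update b i t') s
      ≤ vB i (b i) * detXB (mX VB VS F hFne) i b s - mpB vB VB VS F hFne i b s := by
  have hW := mWB_upclosed VB VS F hFne hdc hmatch hVBmono i b s
  rw [detXB_mX_update, mpB_update, detXB_mX]
  unfold mpB
  by_cases hbw : b i ∈ mWB VB VS F hFne i b s <;>
    by_cases ht'w : t' ∈ mWB VB VS F hFne i b s
  · rw [dif_pos hbw, dif_pos ht'w, if_pos hbw, if_pos ht'w]
  · rw [dif_pos hbw, dif_neg ht'w, if_pos hbw, if_neg ht'w]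
    have h1 := (mWB VB VS F hFne i b s).min'_le (b i) hbw
    have h2 := (hvB i).monotone h1
    linarith
  · rw [dif_neg hbw, dif_pos ht'w, if_neg hbw, if_pos ht'w]
    have hne : (mWB VB VS F hFne i b s).Nonempty := ⟨t', ht'w⟩
    have h1 : ¬ ((mWB VB VS F hFne i b s).min' hne ≤ b i) :=
      fun hle => hbw (hW _ _ ((mWB VB VS F hFne i b s).min'_mem hne) hle)
    have h2 := (hvB i).monotone (not_le.mp h1).le
    linarith
  · rw [dif_neg hbw, dif_neg ht'w, if_neg hbw, if_neg ht'w]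

lemma DSIC_S
    (hdc : ∀ M ∈ F, ∀ M' ⊆ M, M' ∈ F)
    (hmatch : ∀ M ∈ F, ∀ e ∈ M, ∀ e' ∈ M, e ≠ e' → e.1 ≠ e'.1 ∧ e.2 ≠ e'.2)
    (hVSmono : ∀ j, Monotone (VS j)) (hvS : ∀ j, StrictMono (vS j))
    (j : Fin m) (b : ProfileB K) (s : ProfileS K') (t' : Fin (K' j)) :
    mpS vS VB VS F hFne j b (Function.update s j t')
        - vS j (s j) * detXS (mX VB VS F hFne) j b (Function.update s j t')
      ≤ mpS vS VB VS F hFne j b s - vS j (s j) * detXS (mX VB VS F hFne) j b s := by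
  have hW := mWS_downclosed VB VS F hFne hdc hmatch hVSmono j b s
  rw [detXS_mX_update, mpS_update, detXS_mX]
  unfold mpS
  by_cases hsw : s j ∈ mWS VB VS F hFne j b s <;>
    by_cases ht'w : t' ∈ mWS VB VS F hFne j b s
  · rw [dif_pos hsw, dif_pos ht'w, if_pos hsw, if_pos ht'w]
  · rw [dif_pos hsw, dif_neg ht'w, if_pos hsw, if_neg ht'w]
    have h1 := (mWS VB VS F hFne j b s).le_max' (s j) hsw
    have h2 := (hvS j).monotone h1
    linarith
  · rw [dif_neg hsw, dif_pos ht'w, if_neg hsw, if_pos ht'w]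
    have hne : (mWS VB VS F hFne j b s).Nonempty := ⟨t', ht'w⟩
    have h1 : ¬ (s j ≤ (mWS VB VS F hFne j b s).max' hne) :=
      fun hle => hsw (hW _ _ ((mWS VB VS F hFne j b s).max'_mem hne) hle)
    have h2 := (hvS j).monotone (not_le.mp h1).le
    linarith
  · rw [dif_neg hsw, dif_neg ht'w, if_neg hsw, if_neg ht'w]

lemma IR_B (hvB : ∀ i, StrictMono (vB i)) (i : Fin n) (b : ProfileB K) (s : ProfileS K') :
    0 ≤ vB i (b i) * detXB (mX VB VS F hFne) i b s - mpB vB VB VS F hFne i b s := by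
  rw [detXB_mX]
  unfold mpB
  by_cases hbw : b i ∈ mWB VB VS F hFne i b s
  · rw [dif_pos hbw, if_pos hbw]
    have h1 := (mWB VB VS F hFne i b s).min'_le (b i) hbw
    have h2 := (hvB i).monotone h1
    linarith
  · rw [dif_neg hbw, if_neg hbw]
    simp

lemma IR_S (hvS : ∀ j, StrictMono (vS j)) (j : Fin m) (b : ProfileB K) (s : ProfileS K') :
    0 ≤ mpS vS VB VS F hFne j b s - vS j (s j) * detXS (mX VB VS F hFne) j b s := by
  rw [detXS_mX]
  unfold mpS
  by_cases hsw : s j ∈ mWS VB VS F hFne j b s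
  · rw [dif_pos hsw, if_pos hsw]
    have h1 := (mWS VB VS F hFne j b s).le_max' (s j) hsw
    have h2 := (hvS j).monotone h1
    linarith
  · rw [dif_neg hsw, if_neg hsw]
    simp

end Mechanism2
section Mechanism3

variable {n m : ℕ} {K : Fin n → ℕ} {K' : Fin m → ℕ}
variable (vB : ∀ i, Fin (K i) → ℝ) (vS : ∀ j, Fin (K' j) → ℝ)
variable (VB : ∀ i, Fin (K i) → ℝ) (VS : ∀ j, Fin (K' j) → ℝ)
variable (F : Set (Finset (Fin n × Fin m))) (hFne : F.Nonempty)
variable (f : ∀ i, Fin (K i) → ℝ) (g : ∀ j, Fin (K' j) → ℝ)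

lemma Ex_mpB (hf : ∀ i t, 0 < f i t) (hf1 : ∀ i, ∑ t, f i t = 1)
    (hdc : ∀ M ∈ F, ∀ M' ⊆ M, M' ∈ F)
    (hmatch : ∀ M ∈ F, ∀ e ∈ M, ∀ e' ∈ M, e ≠ e' → e.1 ≠ e'.1 ∧ e.2 ≠ e'.2)
    (hVBmono : ∀ i, Monotone (VB i)) (i : Fin n) :
    Ex f g (fun b s => mpB vB VB VS F hFne i b s)
      = Ex f g (fun b s => phi (K i) (vB i) (f i) (b i)
          * (if b i ∈ mWB VB VS F hFne i b s then 1 else 0)) := by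
  rw [Ex_updateB f g hf1 i (fun b s => mpB vB VB VS F hFne i b s),
    Ex_updateB f g hf1 i (fun b s => phi (K i) (vB i) (f i) (b i)
      * (if b i ∈ mWB VB VS F hFne i b s then 1 else 0))]
  congr 1
  funext b s
  have hup := mWB_upclosed VB VS F hFne hdc hmatch hVBmono i b s
  simp only [mpB_update, Function.update_self, mWB_update]
  by_cases hne : (mWB VB VS F hFne i b s).Nonempty
  · set W := mWB VB VS F hFne i b s with hW
    set t₀ := W.min' hne with ht₀
    have hdite : ∀ t : Fin (K i),
        (if h : t ∈ W then vB i (W.min' ⟨t, h⟩) else 0)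
          = if t ∈ W then vB i t₀ else 0 := by
      intro t; split
      · rfl
      · rfl
    have hite : ∀ t : Fin (K i),
        f i t * (phi (K i) (vB i) (f i) t * (if t ∈ W then (1:ℝ) else 0))
          = if t ∈ W then f i t * phi (K i) (vB i) (f i) t else 0 := by
      intro t; by_cases h : t ∈ W <;> simp [h]
    calc ∑ t, f i t * (if h : t ∈ W then vB i (W.min' ⟨t, h⟩) else 0)
        = ∑ t, (if t ∈ W then f i t * vB i t₀ else 0) := by
          refine Finset.sum_congr rfl fun t _ => ?_
          rw [hdite t]
          by_cases h : t ∈ W <;> simp [h]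
      _ = ∑ t ∈ W, f i t * vB i t₀ := by
          rw [Finset.sum_ite_mem, Finset.univ_inter]
      _ = (∑ t ∈ W, f i t) * vB i t₀ := by rw [Finset.sum_mul]
      _ = vB i t₀ * ∑ t ∈ W, f i t := mul_comm _ _
      _ = ∑ t ∈ W, f i t * phi (K i) (vB i) (f i) t := by
          rw [upclosed_eq_Ici W hup hne, ← ht₀]  -- might need adjusting
          exact (telescopeB (vB i) (f i) (hf i) t₀).symm
      _ = ∑ t, (if t ∈ W then f i t * phi (K i) (vB i) (f i) t else 0) := by
          rw [Finset.sum_ite_mem, Finset.univ_inter]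
      _ = ∑ t, f i t * (phi (K i) (vB i) (f i) t * (if t ∈ W then 1 else 0)) := by
          exact Finset.sum_congr rfl fun t _ => (hite t).symm
  · have hempty := Finset.not_nonempty_iff_eq_empty.mp hne
    rw [hempty]
    simp

lemma Ex_mpS (hg : ∀ j t, 0 < g j t) (hg1 : ∀ j, ∑ t, g j t = 1)
    (hdc : ∀ M ∈ F, ∀ M' ⊆ M, M' ∈ F)
    (hmatch : ∀ M ∈ F, ∀ e ∈ M, ∀ e' ∈ M, e ≠ e' → e.1 ≠ e'.1 ∧ e.2 ≠ e'.2)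
    (hVSmono : ∀ j, Monotone (VS j)) (j : Fin m) :
    Ex f g (fun b s => mpS vS VB VS F hFne j b s)
      = Ex f g (fun b s => tau (K' j) (vS j) (g j) (s j)
          * (if s j ∈ mWS VB VS F hFne j b s then 1 else 0)) := by
  rw [Ex_updateS f g hg1 j (fun b s => mpS vS VB VS F hFne j b s),
    Ex_updateS f g hg1 j (fun b s => tau (K' j) (vS j) (g j) (s j)
      * (if s j ∈ mWS VB VS F hFne j b s then 1 else 0))]
  congr 1
  funext b s
  have hdn := mWS_downclosed VB VS F hFne hdc hmatch hVSmono j b s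
  simp only [mpS_update, Function.update_self, mWS_update]
  by_cases hne : (mWS VB VS F hFne j b s).Nonempty
  · set W := mWS VB VS F hFne j b s with hW
    set t₀ := W.max' hne with ht₀
    have hdite : ∀ t : Fin (K' j),
        (if h : t ∈ W then vS j (W.max' ⟨t, h⟩) else 0)
          = if t ∈ W then vS j t₀ else 0 := by
      intro t; split
      · rfl
      · rfl
    have hite : ∀ t : Fin (K' j),
        g j t * (tau (K' j) (vS j) (g j) t * (if t ∈ W then (1:ℝ) else 0))
          = if t ∈ W then g j t * tau (K' j) (vS j) (g j) t else 0 := by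
      intro t; by_cases h : t ∈ W <;> simp [h]
    calc ∑ t, g j t * (if h : t ∈ W then vS j (W.max' ⟨t, h⟩) else 0)
        = ∑ t, (if t ∈ W then g j t * vS j t₀ else 0) := by
          refine Finset.sum_congr rfl fun t _ => ?_
          rw [hdite t]
          by_cases h : t ∈ W <;> simp [h]
      _ = ∑ t ∈ W, g j t * vS j t₀ := by
          rw [Finset.sum_ite_mem, Finset.univ_inter]
      _ = (∑ t ∈ W, g j t) * vS j t₀ := by rw [Finset.sum_mul]
      _ = vS j t₀ * ∑ t ∈ W, g j t := mul_comm _ _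
      _ = ∑ t ∈ W, g j t * tau (K' j) (vS j) (g j) t := by
          rw [downclosed_eq_Iic W hdn hne, ← ht₀]
          exact (telescopeS (vS j) (g j) (hg j) t₀).symm
      _ = ∑ t, (if t ∈ W then g j t * tau (K' j) (vS j) (g j) t else 0) := by
          rw [Finset.sum_ite_mem, Finset.univ_inter]
      _ = ∑ t, g j t * (tau (K' j) (vS j) (g j) t * (if t ∈ W then 1 else 0)) := by
          exact Finset.sum_congr rfl fun t _ => (hite t).symm
  · have hempty := Finset.not_nonempty_iff_eq_empty.mp hne
    rw [hempty]
    simp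

end Mechanism3
section Mechanism4

variable {n m : ℕ} {K : Fin n → ℕ} {K' : Fin m → ℕ}
variable (vB : ∀ i, Fin (K i) → ℝ) (vS : ∀ j, Fin (K' j) → ℝ)
variable (VB : ∀ i, Fin (K i) → ℝ) (VS : ∀ j, Fin (K' j) → ℝ)
variable (F : Set (Finset (Fin n × Fin m))) (hFne : F.Nonempty)
variable (f : ∀ i, Fin (K i) → ℝ) (g : ∀ j, Fin (K' j) → ℝ)

lemma mX_def (b : ProfileB K) (s : ProfileS K') :
    mX VB VS F hFne b s = Fsel F hFne (mwt VB VS b s) := rfl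

lemma mpS_le_partner
    (hdc : ∀ M ∈ F, ∀ M' ⊆ M, M' ∈ F)
    (hmatch : ∀ M ∈ F, ∀ e ∈ M, ∀ e' ∈ M, e ≠ e' → e.1 ≠ e'.1 ∧ e.2 ≠ e'.2)
    (hVSge : ∀ j t, vS j t ≤ VS j t)
    {b : ProfileB K} {s : ProfileS K'} {i₀ : Fin n} {j : Fin m}
    (he₀ : (i₀, j) ∈ mX VB VS F hFne b s) :
    mpS vS VB VS F hFne j b s ≤ VB i₀ (b i₀) := by
  have hcov : s j ∈ mWS VB VS F hFne j b s :=
    (self_mem_mWS VB VS F hFne).mpr ⟨i₀, he₀⟩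
  have hne : (mWS VB VS F hFne j b s).Nonempty := ⟨_, hcov⟩
  have ht''mem := (mWS VB VS F hFne j b s).max'_mem hne
  obtain ⟨i₁, hi₁⟩ := (mem_mWS VB VS F hFne).mp ht''mem
  rw [mX_def] at he₀ hi₁
  have hthr := Fsel_threshold F hFne hdc
    (mwt VB VS b s)
    (mwt VB VS b (Function.update s j ((mWS VB VS F hFne j b s).max' hne)))
    (VS j (s j) - VS j ((mWS VB VS F hFne j b s).max' hne))
    (fun e => e.2 = j)
    (fun M hM => col_unique F hmatch hM j)
    (fun e => by
      by_cases h : e.2 = j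
      · rw [if_pos h]
        subst h
        unfold mwt
        rw [Function.update_self]
        ring
      · rw [if_neg h]
        unfold mwt
        rw [Function.update_of_ne h, add_zero])
    he₀ rfl ⟨(i₁, j), hi₁, rfl⟩
  have h2 : VS j ((mWS VB VS F hFne j b s).max' hne) ≤ VB i₀ (b i₀) := by
    unfold mwt at hthr
    dsimp only at hthr
    linarith
  have h3 : mpS vS VB VS F hFne j b s
      = vS j ((mWS VB VS F hFne j b s).max' hne) := by
    unfold mpS
    rw [dif_pos hcov]
  rw [h3]
  exact le_trans (hVSge j _) h2

lemma mpB_ge_partner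
    (hdc : ∀ M ∈ F, ∀ M' ⊆ M, M' ∈ F)
    (hmatch : ∀ M ∈ F, ∀ e ∈ M, ∀ e' ∈ M, e ≠ e' → e.1 ≠ e'.1 ∧ e.2 ≠ e'.2)
    (hVBle : ∀ i t, VB i t ≤ vB i t)
    {b : ProfileB K} {s : ProfileS K'} {i : Fin n} {j₀ : Fin m}
    (he₀ : (i, j₀) ∈ mX VB VS F hFne b s) :
    VS j₀ (s j₀) ≤ mpB vB VB VS F hFne i b s := by
  have hcov : b i ∈ mWB VB VS F hFne i b s :=
    (self_mem_mWB VB VS F hFne).mpr ⟨j₀, he₀⟩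
  have hne : (mWB VB VS F hFne i b s).Nonempty := ⟨_, hcov⟩
  have ht''mem := (mWB VB VS F hFne i b s).min'_mem hne
  obtain ⟨j₁, hj₁⟩ := (mem_mWB VB VS F hFne).mp ht''mem
  rw [mX_def] at he₀ hj₁
  have hthr := Fsel_threshold F hFne hdc
    (mwt VB VS b s)
    (mwt VB VS (Function.update b i ((mWB VB VS F hFne i b s).min' hne)) s)
    (VB i ((mWB VB VS F hFne i b s).min' hne) - VB i (b i))
    (fun e => e.1 = i)
    (fun M hM => row_unique F hmatch hM i)
    (fun e => by
      by_cases h : e.1 = i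
      · rw [if_pos h]
        subst h
        unfold mwt
        rw [Function.update_self]
        ring
      · rw [if_neg h]
        unfold mwt
        rw [Function.update_of_ne h, add_zero])
    he₀ rfl ⟨(i, j₁), hj₁, rfl⟩
  have h2 : VS j₀ (s j₀) ≤ VB i ((mWB VB VS F hFne i b s).min' hne) := by
    unfold mwt at hthr
    dsimp only at hthr
    linarith
  have h3 : mpB vB VB VS F hFne i b s
      = vB i ((mWB VB VS F hFne i b s).min' hne) := by
    unfold mpB
    rw [dif_pos hcov]
  rw [h3]
  exact le_trans h2 (hVBle i _)

lemma sum_mpS_le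
    (hdc : ∀ M ∈ F, ∀ M' ⊆ M, M' ∈ F)
    (hmatch : ∀ M ∈ F, ∀ e ∈ M, ∀ e' ∈ M, e ≠ e' → e.1 ≠ e'.1 ∧ e.2 ≠ e'.2)
    (hVSge : ∀ j t, vS j t ≤ VS j t) (b : ProfileB K) (s : ProfileS K') :
    ∑ j, mpS vS VB VS F hFne j b s ≤ ∑ e ∈ mX VB VS F hFne b s, VB e.1 (b e.1) := by
  classical
  rw [← Finset.sum_fiberwise (mX VB VS F hFne b s) (fun e => e.2) (fun e => VB e.1 (b e.1))]
  apply Finset.sum_le_sum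
  intro j _
  by_cases hc : ∃ i, (i, j) ∈ mX VB VS F hFne b s
  · obtain ⟨i₀, hi₀⟩ := hc
    rw [col_filter_eq (col_unique F hmatch (mX_mem VB VS F hFne b s) j) hi₀,
      Finset.sum_singleton]
    exact mpS_le_partner vS VB VS F hFne hdc hmatch hVSge hi₀
  · rw [col_filter_empty hc, Finset.sum_empty]
    have h0 : mpS vS VB VS F hFne j b s = 0 := by
      unfold mpS
      rw [dif_neg (fun h => hc ((self_mem_mWS VB VS F hFne).mp h))]
    rw [h0]

lemma sum_mpB_ge
    (hdc : ∀ M ∈ F, ∀ M' ⊆ M, M' ∈ F)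
    (hmatch : ∀ M ∈ F, ∀ e ∈ M, ∀ e' ∈ M, e ≠ e' → e.1 ≠ e'.1 ∧ e.2 ≠ e'.2)
    (hVBle : ∀ i t, VB i t ≤ vB i t) (b : ProfileB K) (s : ProfileS K') :
    ∑ e ∈ mX VB VS F hFne b s, VS e.2 (s e.2) ≤ ∑ i, mpB vB VB VS F hFne i b s := by
  classical
  rw [← Finset.sum_fiberwise (mX VB VS F hFne b s) (fun e => e.1) (fun e => VS e.2 (s e.2))]
  apply Finset.sum_le_sum
  intro i _
  by_cases hc : ∃ j, (i, j) ∈ mX VB VS F hFne b s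
  · obtain ⟨j₀, hj₀⟩ := hc
    rw [row_filter_eq (row_unique F hmatch (mX_mem VB VS F hFne b s) i) hj₀,
      Finset.sum_singleton]
    exact mpB_ge_partner vB VB VS F hFne hdc hmatch hVBle hj₀
  · rw [row_filter_empty hc, Finset.sum_empty]
    have h0 : mpB vB VB VS F hFne i b s = 0 := by
      unfold mpB
      rw [dif_neg (fun h => hc ((self_mem_mWB VB VS F hFne).mp h))]
    rw [h0]

lemma sum_phi_z
    (hmatch : ∀ M ∈ F, ∀ e ∈ M, ∀ e' ∈ M, e ≠ e' → e.1 ≠ e'.1 ∧ e.2 ≠ e'.2)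
    (b : ProfileB K) (s : ProfileS K') (h : ∀ i : Fin n, ℝ) :
    ∑ i, h i * (if b i ∈ mWB VB VS F hFne i b s then (1:ℝ) else 0)
      = ∑ e ∈ mX VB VS F hFne b s, h e.1 := by
  rw [← sum_row_indicator (fun i => row_unique F hmatch (mX_mem VB VS F hFne b s) i) h]
  refine Finset.sum_congr rfl fun i _ => ?_
  by_cases hc : ∃ j, (i, j) ∈ mX VB VS F hFne b s
  · rw [if_pos hc, if_pos ((self_mem_mWB VB VS F hFne).mpr hc), mul_one]
  · rw [if_neg hc, if_neg (fun hmem => hc ((self_mem_mWB VB VS F hFne).mp hmem)), mul_zero]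

lemma sum_tau_z
    (hmatch : ∀ M ∈ F, ∀ e ∈ M, ∀ e' ∈ M, e ≠ e' → e.1 ≠ e'.1 ∧ e.2 ≠ e'.2)
    (b : ProfileB K) (s : ProfileS K') (h : ∀ j : Fin m, ℝ) :
    ∑ j, h j * (if s j ∈ mWS VB VS F hFne j b s then (1:ℝ) else 0)
      = ∑ e ∈ mX VB VS F hFne b s, h e.2 := by
  rw [← sum_col_indicator (fun j => col_unique F hmatch (mX_mem VB VS F hFne b s) j) h]
  refine Finset.sum_congr rfl fun j _ => ?_
  by_cases hc : ∃ i, (i, j) ∈ mX VB VS F hFne b s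
  · rw [if_pos hc, if_pos ((self_mem_mWS VB VS F hFne).mpr hc), mul_one]
  · rw [if_neg hc, if_neg (fun hmem => hc ((self_mem_mWS VB VS F hFne).mp hmem)), mul_zero]

end Mechanism4
section Bounds

variable {n m : ℕ} {K : Fin n → ℕ} {K' : Fin m → ℕ}
variable (vB : ∀ i, Fin (K i) → ℝ) (vS : ∀ j, Fin (K' j) → ℝ)
variable (VB : ∀ i, Fin (K i) → ℝ) (VS : ∀ j, Fin (K' j) → ℝ)
variable (F : Set (Finset (Fin n × Fin m))) (hFne : F.Nonempty)
variable (f : ∀ i, Fin (K i) → ℝ) (g : ∀ j, Fin (K' j) → ℝ)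

lemma impl_le_val {xv : Fin n × Fin m → ℝ}
    (γ : Finset (Fin n × Fin m) → ℝ)
    (hγpos : ∀ M, 0 ≤ γ M) (hγF : ∀ M, γ M ≠ 0 → M ∈ F) (hγ1 : ∑ M, γ M = 1)
    (hx : ∀ e, xv e = ∑ M, γ M * (if e ∈ M then 1 else 0))
    (wt : Fin n × Fin m → ℝ) :
    ∑ e, xv e * wt e ≤ ∑ e ∈ Fsel F hFne wt, wt e := by
  classical
  calc ∑ e, xv e * wt e
      = ∑ e, ∑ M, γ M * (if e ∈ M then 1 else 0) * wt e := by
        refine Finset.sum_congr rfl fun e _ => ?_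
        rw [hx e, Finset.sum_mul]
    _ = ∑ M, ∑ e, γ M * (if e ∈ M then 1 else 0) * wt e := Finset.sum_comm
    _ = ∑ M, γ M * ∑ e ∈ M, wt e := by
        refine Finset.sum_congr rfl fun M _ => ?_
        calc ∑ e, γ M * (if e ∈ M then (1:ℝ) else 0) * wt e
            = ∑ e, (if e ∈ M then γ M * wt e else 0) :=
              Finset.sum_congr rfl fun e _ => by by_cases h : e ∈ M <;> simp [h]
          _ = ∑ e ∈ M, γ M * wt e := by rw [Finset.sum_ite_mem, Finset.univ_inter]
          _ = γ M * ∑ e ∈ M, wt e := (Finset.mul_sum _ _ _).symm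
    _ ≤ ∑ M, γ M * ∑ e ∈ Fsel F hFne wt, wt e := by
        refine Finset.sum_le_sum fun M _ => ?_
        by_cases h0 : γ M = 0
        · rw [h0, zero_mul, zero_mul]
        · exact mul_le_mul_of_nonneg_left (Fsel_opt F hFne wt M (hγF M h0)) (hγpos M)
    _ = (∑ M, γ M) * ∑ e ∈ Fsel F hFne wt, wt e := (Finset.sum_mul _ _ _).symm
    _ = ∑ e ∈ Fsel F hFne wt, wt e := by rw [hγ1, one_mul]

/-- domination of any implementable mechanism's `(VB, VS)`-virtual surplus by the GFT of `mX`. -/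
lemma dominate
    (hf : ∀ i t, 0 < f i t) (hg : ∀ j t, 0 < g j t)
    (hVBle : ∀ i t, VB i t ≤ vB i t) (hVSge : ∀ j t, vS j t ≤ VS j t)
    {x' : ProfileB K → ProfileS K' → Fin n × Fin m → ℝ}
    (himp : Implementable F x') :
    Ex f g (fun b s => ∑ i, ∑ j, x' b s (i, j) * (VB i (b i) - VS j (s j)))
      ≤ Ex f g (fun b s => ∑ e ∈ mX VB VS F hFne b s, (vB e.1 (b e.1) - vS e.2 (s e.2))) := by
  apply Ex_mono f g hf hg
  intro b s
  obtain ⟨γ, hγpos, hγF, hγ1, hx⟩ := himp b s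
  calc ∑ i, ∑ j, x' b s (i, j) * (VB i (b i) - VS j (s j))
      = ∑ e : Fin n × Fin m, x' b s e * mwt VB VS b s e := by
        rw [Fintype.sum_prod_type]
        rfl
    _ ≤ ∑ e ∈ Fsel F hFne (mwt VB VS b s), mwt VB VS b s e :=
        impl_le_val F hFne γ hγpos hγF hγ1 hx _
    _ ≤ ∑ e ∈ mX VB VS F hFne b s, (vB e.1 (b e.1) - vS e.2 (s e.2)) := by
        rw [← mX_def]
        refine Finset.sum_le_sum fun e _ => ?_
        unfold mwt
        have := hVBle e.1 (b e.1)
        have := hVSge e.2 (s e.2)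
        linarith

lemma utilB_eq
    (x' : ProfileB K → ProfileS K' → Fin n × Fin m → ℝ)
    (pB' : Fin n → ProfileB K → ProfileS K' → ℝ) (i : Fin n) (t t' : Fin (K i)) :
    utilB vB f g x' pB' i t t'
      = vB i t * Ex f g (fun b s => ∑ j, x' (Function.update b i t') s (i, j))
        - Ex f g (fun b s => pB' i (Function.update b i t') s) := by
  rw [utilB]
  rw [Ex_sub f g (fun b s => vB i t * (∑ j, x' (Function.update b i t') s (i, j)))
    (fun b s => pB' i (Function.update b i t') s)]
  rw [Ex_smul]

lemma utilS_eq
    (x' : ProfileB K → ProfileS K' → Fin n × Fin m → ℝ)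
    (pS' : Fin m → ProfileB K → ProfileS K' → ℝ) (j : Fin m) (t t' : Fin (K' j)) :
    utilS vS f g x' pS' j t t'
      = Ex f g (fun b s => pS' j b (Function.update s j t'))
        - vS j t * Ex f g (fun b s => ∑ i, x' b (Function.update s j t') (i, j)) := by
  rw [utilS]
  rw [Ex_sub f g (fun b s => pS' j b (Function.update s j t'))
    (fun b s => vS j t * (∑ i, x' b (Function.update s j t') (i, j)))]
  rw [Ex_smul]

lemma utilB_sum (hf1 : ∀ i, ∑ t, f i t = 1)
    (x' : ProfileB K → ProfileS K' → Fin n × Fin m → ℝ)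
    (pB' : Fin n → ProfileB K → ProfileS K' → ℝ) (i : Fin n) :
    ∑ t, f i t * utilB vB f g x' pB' i t t
      = Ex f g (fun b s => vB i (b i) * (∑ j, x' b s (i, j)) - pB' i b s) := by
  rw [Ex_updateB f g hf1 i (fun b s => vB i (b i) * (∑ j, x' b s (i, j)) - pB' i b s)]
  rw [Ex_sum f g Finset.univ (fun t b s =>
    f i t * (vB i ((Function.update b i t) i) * (∑ j, x' (Function.update b i t) s (i, j))
      - pB' i (Function.update b i t) s))]
  refine Finset.sum_congr rfl fun t _ => ?_
  rw [Ex_smul f g (f i t) (fun b s =>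
    vB i ((Function.update b i t) i) * (∑ j, x' (Function.update b i t) s (i, j))
      - pB' i (Function.update b i t) s)]
  congr 1
  rw [utilB]
  congr 1
  funext b s
  rw [Function.update_self]

lemma utilS_sum (hg1 : ∀ j, ∑ t, g j t = 1)
    (x' : ProfileB K → ProfileS K' → Fin n × Fin m → ℝ)
    (pS' : Fin m → ProfileB K → ProfileS K' → ℝ) (j : Fin m) :
    ∑ t, g j t * utilS vS f g x' pS' j t t
      = Ex f g (fun b s => pS' j b s - vS j (s j) * (∑ i, x' b s (i, j))) := by
  rw [Ex_updateS f g hg1 j (fun b s => pS' j b s - vS j (s j) * (∑ i, x' b s (i, j)))]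
  rw [Ex_sum f g Finset.univ (fun t b s =>
    g j t * (pS' j b (Function.update s j t)
      - vS j ((Function.update s j t) j) * (∑ i, x' b (Function.update s j t) (i, j))))]
  refine Finset.sum_congr rfl fun t _ => ?_
  rw [Ex_smul f g (g j t) (fun b s =>
    pS' j b (Function.update s j t)
      - vS j ((Function.update s j t) j) * (∑ i, x' b (Function.update s j t) (i, j)))]
  congr 1
  rw [utilS]
  congr 1
  funext b s
  rw [Function.update_self]

end Bounds
section Rent

variable {n m : ℕ} {K : Fin n → ℕ} {K' : Fin m → ℕ}
variable (vB : ∀ i, Fin (K i) → ℝ) (vS : ∀ j, Fin (K' j) → ℝ)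
variable (f : ∀ i, Fin (K i) → ℝ) (g : ∀ j, Fin (K' j) → ℝ)

lemma rentB (hf : ∀ i t, 0 < f i t) (hf1 : ∀ i, ∑ t, f i t = 1)
    (x' : ProfileB K → ProfileS K' → Fin n × Fin m → ℝ)
    (pB' : Fin n → ProfileB K → ProfileS K' → ℝ) (i : Fin n)
    (hBIC : ∀ t t', utilB vB f g x' pB' i t t' ≤ utilB vB f g x' pB' i t t)
    (hIR : ∀ t, 0 ≤ utilB vB f g x' pB' i t t) :
    Ex f g (fun b s => (vB i (b i) - phi (K i) (vB i) (f i) (b i)) * ∑ j, x' b s (i, j))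
      ≤ ∑ t, f i t * utilB vB f g x' pB' i t t := by
  set xh : Fin (K i) → ℝ :=
    fun t => Ex f g (fun b s => ∑ j, x' (Function.update b i t) s (i, j)) with hxh
  set u : Fin (K i) → ℝ := fun t => utilB vB f g x' pB' i t t with hu
  have hstep : ∀ (t : Fin (K i)) (h : (t : ℕ) + 1 < K i),
      u t + (vB i ⟨(t : ℕ) + 1, h⟩ - vB i t) * xh t ≤ u ⟨(t : ℕ) + 1, h⟩ := by
    intro t h
    have h1 := hBIC ⟨(t : ℕ) + 1, h⟩ t
    have e1 : utilB vB f g x' pB' i ⟨(t : ℕ) + 1, h⟩ t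
        = vB i ⟨(t : ℕ) + 1, h⟩ * xh t
          - Ex f g (fun b s => pB' i (Function.update b i t) s) :=
      utilB_eq vB f g x' pB' i _ t
    have e2 : u t = vB i t * xh t
        - Ex f g (fun b s => pB' i (Function.update b i t) s) :=
      utilB_eq vB f g x' pB' i t t
    rw [e1] at h1
    have e3 : u ⟨(t : ℕ) + 1, h⟩ = utilB vB f g x' pB' i ⟨(t : ℕ) + 1, h⟩ ⟨(t : ℕ) + 1, h⟩ := rfl
    rw [← e3] at h1
    linarith
  have hchain := chainB (vB i) xh u hIR hstep
  calc Ex f g (fun b s => (vB i (b i) - phi (K i) (vB i) (f i) (b i)) * ∑ j, x' b s (i, j))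
      = Ex f g (fun b s => ∑ t, f i t * ((vB i t - phi (K i) (vB i) (f i) t)
          * ∑ j, x' (Function.update b i t) s (i, j))) := by
        rw [Ex_updateB f g hf1 i
          (fun b s => (vB i (b i) - phi (K i) (vB i) (f i) (b i)) * ∑ j, x' b s (i, j))]
        congr 1
        funext b s
        refine Finset.sum_congr rfl fun t _ => ?_
        simp only [Function.update_self]
    _ = ∑ t, f i t * ((vB i t - phi (K i) (vB i) (f i) t) * xh t) := by
        rw [Ex_sum f g Finset.univ (fun t b s => f i t * ((vB i t - phi (K i) (vB i) (f i) t)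
          * ∑ j, x' (Function.update b i t) s (i, j)))]
        refine Finset.sum_congr rfl fun t _ => ?_
        rw [show (fun b s => f i t * ((vB i t - phi (K i) (vB i) (f i) t)
            * ∑ j, x' (Function.update b i t) s (i, j)))
          = (fun b s => (f i t * (vB i t - phi (K i) (vB i) (f i) t))
            * ∑ j, x' (Function.update b i t) s (i, j)) from
          funext fun b => funext fun s => by ring]
        rw [Ex_smul f g (f i t * (vB i t - phi (K i) (vB i) (f i) t))
          (fun b s => ∑ j, x' (Function.update b i t) s (i, j))]
        simp only [hxh]
        ring
    _ = ∑ t, ((vnext (vB i) t - vB i t) * ∑ l ∈ Finset.Ioi t, f i l) * xh t := by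
        refine Finset.sum_congr rfl fun t _ => ?_
        rw [← mul_assoc, phi_expand (vB i) (f i) (hf i) t]
    _ = ∑ t, ∑ l ∈ Finset.Ioi t, ((vnext (vB i) t - vB i t) * xh t) * f i l := by
        refine Finset.sum_congr rfl fun t _ => ?_
        calc ((vnext (vB i) t - vB i t) * ∑ l ∈ Finset.Ioi t, f i l) * xh t
            = ((vnext (vB i) t - vB i t) * xh t) * ∑ l ∈ Finset.Ioi t, f i l := by ring
          _ = ∑ l ∈ Finset.Ioi t, ((vnext (vB i) t - vB i t) * xh t) * f i l :=
              Finset.mul_sum _ _ _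
    _ = ∑ l, ∑ t ∈ Finset.Iio l, ((vnext (vB i) t - vB i t) * xh t) * f i l :=
        sum_Ioi_swap _
    _ = ∑ l, f i l * ∑ t ∈ Finset.Iio l, (vnext (vB i) t - vB i t) * xh t := by
        refine Finset.sum_congr rfl fun l _ => ?_
        rw [Finset.mul_sum]
        exact Finset.sum_congr rfl fun t _ => by ring
    _ ≤ ∑ l, f i l * u l :=
        Finset.sum_le_sum fun l _ => mul_le_mul_of_nonneg_left (hchain l) (hf i l).le
    _ = ∑ t, f i t * utilB vB f g x' pB' i t t := rfl

lemma rentS (hg : ∀ j t, 0 < g j t) (hg1 : ∀ j, ∑ t, g j t = 1)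
    (x' : ProfileB K → ProfileS K' → Fin n × Fin m → ℝ)
    (pS' : Fin m → ProfileB K → ProfileS K' → ℝ) (j : Fin m)
    (hBIC : ∀ t t', utilS vS f g x' pS' j t t' ≤ utilS vS f g x' pS' j t t)
    (hIR : ∀ t, 0 ≤ utilS vS f g x' pS' j t t) :
    Ex f g (fun b s => (tau (K' j) (vS j) (g j) (s j) - vS j (s j)) * ∑ i, x' b s (i, j))
      ≤ ∑ t, g j t * utilS vS f g x' pS' j t t := by
  set yh : Fin (K' j) → ℝ :=
    fun t => Ex f g (fun b s => ∑ i, x' b (Function.update s j t) (i, j)) with hyh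
  set u : Fin (K' j) → ℝ := fun t => utilS vS f g x' pS' j t t with hu
  have hstep : ∀ (t : Fin (K' j)) (h : 0 < (t : ℕ)),
      u t + (vS j t - vS j ⟨(t : ℕ) - 1, Nat.lt_of_le_of_lt (Nat.sub_le _ _) t.isLt⟩) * yh t
        ≤ u ⟨(t : ℕ) - 1, Nat.lt_of_le_of_lt (Nat.sub_le _ _) t.isLt⟩ := by
    intro t h
    have h1 := hBIC ⟨(t : ℕ) - 1, Nat.lt_of_le_of_lt (Nat.sub_le _ _) t.isLt⟩ t
    have e1 : utilS vS f g x' pS' j ⟨(t : ℕ) - 1, Nat.lt_of_le_of_lt (Nat.sub_le _ _) t.isLt⟩ t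
        = Ex f g (fun b s => pS' j b (Function.update s j t))
          - vS j ⟨(t : ℕ) - 1, Nat.lt_of_le_of_lt (Nat.sub_le _ _) t.isLt⟩ * yh t :=
      utilS_eq vS f g x' pS' j _ t
    have e2 : u t = Ex f g (fun b s => pS' j b (Function.update s j t)) - vS j t * yh t :=
      utilS_eq vS f g x' pS' j t t
    rw [e1] at h1
    linarith
  have hchain := chainS (vS j) yh u hIR hstep
  calc Ex f g (fun b s => (tau (K' j) (vS j) (g j) (s j) - vS j (s j)) * ∑ i, x' b s (i, j))
      = Ex f g (fun b s => ∑ t, g j t * ((tau (K' j) (vS j) (g j) t - vS j t)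
          * ∑ i, x' b (Function.update s j t) (i, j))) := by
        rw [Ex_updateS f g hg1 j
          (fun b s => (tau (K' j) (vS j) (g j) (s j) - vS j (s j)) * ∑ i, x' b s (i, j))]
        congr 1
        funext b s
        refine Finset.sum_congr rfl fun t _ => ?_
        simp only [Function.update_self]
    _ = ∑ t, g j t * ((tau (K' j) (vS j) (g j) t - vS j t) * yh t) := by
        rw [Ex_sum f g Finset.univ (fun t b s => g j t * ((tau (K' j) (vS j) (g j) t - vS j t)
          * ∑ i, x' b (Function.update s j t) (i, j)))]
        refine Finset.sum_congr rfl fun t _ => ?_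
        rw [show (fun b s => g j t * ((tau (K' j) (vS j) (g j) t - vS j t)
            * ∑ i, x' b (Function.update s j t) (i, j)))
          = (fun b s => (g j t * (tau (K' j) (vS j) (g j) t - vS j t))
            * ∑ i, x' b (Function.update s j t) (i, j)) from
          funext fun b => funext fun s => by ring]
        rw [Ex_smul f g (g j t * (tau (K' j) (vS j) (g j) t - vS j t))
          (fun b s => ∑ i, x' b (Function.update s j t) (i, j))]
        simp only [hyh]
        ring
    _ = ∑ t, ((vS j t - vprev (vS j) t) * ∑ l ∈ Finset.Iio t, g j l) * yh t := by
        refine Finset.sum_congr rfl fun t _ => ?_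
        rw [← mul_assoc, tau_expand (vS j) (g j) (hg j) t]
    _ = ∑ t, ∑ l ∈ Finset.Iio t, ((vS j t - vprev (vS j) t) * yh t) * g j l := by
        refine Finset.sum_congr rfl fun t _ => ?_
        calc ((vS j t - vprev (vS j) t) * ∑ l ∈ Finset.Iio t, g j l) * yh t
            = ((vS j t - vprev (vS j) t) * yh t) * ∑ l ∈ Finset.Iio t, g j l := by ring
          _ = ∑ l ∈ Finset.Iio t, ((vS j t - vprev (vS j) t) * yh t) * g j l :=
              Finset.mul_sum _ _ _
    _ = ∑ l, ∑ t ∈ Finset.Ioi l, ((vS j t - vprev (vS j) t) * yh t) * g j l :=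
        (sum_Ioi_swap (fun a b => ((vS j b - vprev (vS j) b) * yh b) * g j a)).symm
    _ = ∑ l, g j l * ∑ t ∈ Finset.Ioi l, (vS j t - vprev (vS j) t) * yh t := by
        refine Finset.sum_congr rfl fun l _ => ?_
        rw [Finset.mul_sum]
        exact Finset.sum_congr rfl fun t _ => by ring
    _ ≤ ∑ l, g j l * u l :=
        Finset.sum_le_sum fun l _ => mul_le_mul_of_nonneg_left (hchain l) (hg j l).le
    _ = ∑ t, g j t * utilS vS f g x' pS' j t t := rfl

end Rent

/-- in a double auction with regular distributions there is a deterministic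
feasible allocation `X` and payments making the mechanism DSIC, ex-post IR and ex-ante
WBB, whose GFT is at least half the GFT of every implementable IR, BIC, ex-ante WBB
mechanism. -/
theorem stmt_10
    (n m : ℕ) (hn : 0 < n) (hm : 0 < m)
    (K : Fin n → ℕ) (hK : ∀ i, 0 < K i)
    (K' : Fin m → ℕ) (hK' : ∀ j, 0 < K' j)
    (vB : ∀ i, Fin (K i) → ℝ) (hvB : ∀ i, StrictMono (vB i))
    (vS : ∀ j, Fin (K' j) → ℝ) (hvS : ∀ j, StrictMono (vS j))
    (f : ∀ i, Fin (K i) → ℝ) (hf : ∀ i t, 0 < f i t) (hf1 : ∀ i, ∑ t, f i t = 1)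
    (g : ∀ j, Fin (K' j) → ℝ) (hg : ∀ j t, 0 < g j t) (hg1 : ∀ j, ∑ t, g j t = 1)
    (hregB : ∀ i, Monotone (phi (K i) (vB i) (f i)))
    (hregS : ∀ j, Monotone (tau (K' j) (vS j) (g j)))
    (F : Set (Finset (Fin n × Fin m))) (hFne : F.Nonempty)
    (hdc : ∀ M ∈ F, ∀ M' ⊆ M, M' ∈ F)
    (hmatch : ∀ M ∈ F, ∀ e ∈ M, ∀ e' ∈ M, e ≠ e' → e.1 ≠ e'.1 ∧ e.2 ≠ e'.2) :
    ∃ (X : ProfileB K → ProfileS K' → Finset (Fin n × Fin m))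
      (pB : Fin n → ProfileB K → ProfileS K' → ℝ)
      (pS : Fin m → ProfileB K → ProfileS K' → ℝ),
      -- feasibility
      (∀ b s, X b s ∈ F) ∧
      -- DSIC for buyers
      (∀ (i : Fin n) (b : ProfileB K) (s : ProfileS K') (t' : Fin (K i)),
        vB i (b i) * detXB X i (Function.update b i t') s
            - pB i (Function.update b i t') s
          ≤ vB i (b i) * detXB X i b s - pB i b s) ∧
      -- DSIC for sellers
      (∀ (j : Fin m) (b : ProfileB K) (s : ProfileS K') (t' : Fin (K' j)),
        pS j b (Function.update s j t')
            - vS j (s j) * detXS X j b (Function.update s j t')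
          ≤ pS j b s - vS j (s j) * detXS X j b s) ∧
      -- ex-post IR
      (∀ (i : Fin n) (b : ProfileB K) (s : ProfileS K'),
        0 ≤ vB i (b i) * detXB X i b s - pB i b s) ∧
      (∀ (j : Fin m) (b : ProfileB K) (s : ProfileS K'),
        0 ≤ pS j b s - vS j (s j) * detXS X j b s) ∧
      -- ex-ante WBB
      (0 ≤ Ex f g (fun b s => (∑ i, pB i b s) - ∑ j, pS j b s)) ∧
      -- 2·GFT(X) ≥ GFT(M') for every implementable IR, BIC, ex-ante WBB mechanism M'
      (∀ (x' : ProfileB K → ProfileS K' → Fin n × Fin m → ℝ)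
         (pB' : Fin n → ProfileB K → ProfileS K' → ℝ)
         (pS' : Fin m → ProfileB K → ProfileS K' → ℝ),
        Implementable F x' →
        (∀ (i : Fin n) (t t' : Fin (K i)),
          utilB vB f g x' pB' i t t' ≤ utilB vB f g x' pB' i t t) →
        (∀ (j : Fin m) (t t' : Fin (K' j)),
          utilS vS f g x' pS' j t t' ≤ utilS vS f g x' pS' j t t) →
        (∀ (i : Fin n) (t : Fin (K i)), 0 ≤ utilB vB f g x' pB' i t t) →
        (∀ (j : Fin m) (t : Fin (K' j)), 0 ≤ utilS vS f g x' pS' j t t) →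
        (0 ≤ Ex f g (fun b s => (∑ i, pB' i b s) - ∑ j, pS' j b s)) →
        Ex f g (fun b s => ∑ i, ∑ j, x' b s (i, j) * (vB i (b i) - vS j (s j)))
          ≤ 2 * Ex f g (fun b s => ∑ e ∈ X b s, (vB e.1 (b e.1) - vS e.2 (s e.2)))) := by
  classical
  -- virtual value transforms
  set PHI : ∀ i, Fin (K i) → ℝ := fun i => phi (K i) (vB i) (f i) with hPHI
  set TAU : ∀ j, Fin (K' j) → ℝ := fun j => tau (K' j) (vS j) (g j) with hTAU
  have hPHImono : ∀ i, Monotone (PHI i) := hregB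
  have hTAUmono : ∀ j, Monotone (TAU j) := hregS
  have hvBmono : ∀ i, Monotone (vB i) := fun i => (hvB i).monotone
  have hvSmono : ∀ j, Monotone (vS j) := fun j => (hvS j).monotone
  have hPHIle : ∀ i t, PHI i t ≤ vB i t := fun i t => phi_le (vB i) (f i) (hvBmono i) (hf i) t
  have hTAUge : ∀ j t, vS j t ≤ TAU j t := fun j t => tau_ge (vS j) (g j) (hvSmono j) (hg j) t
  have hvBle : ∀ i t, vB i t ≤ vB i t := fun i t => le_refl _
  have hvSge : ∀ j t, vS j t ≤ vS j t := fun j t => le_refl _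
  -- the two mechanisms' gains from trade
  set GFTBO : ℝ := Ex f g (fun b s =>
    ∑ e ∈ mX PHI vS F hFne b s, (vB e.1 (b e.1) - vS e.2 (s e.2))) with hGFTBO
  set GFTSO : ℝ := Ex f g (fun b s =>
    ∑ e ∈ mX vB TAU F hFne b s, (vB e.1 (b e.1) - vS e.2 (s e.2))) with hGFTSO
  -- WBB of the buyer-offering mechanism
  have hWBB_BO : 0 ≤ Ex f g (fun b s =>
      (∑ i, mpB vB PHI vS F hFne i b s) - ∑ j, mpS vS PHI vS F hFne j b s) := by
    rw [Ex_sub f g (fun b s => ∑ i, mpB vB PHI vS F hFne i b s)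
      (fun b s => ∑ j, mpS vS PHI vS F hFne j b s)]
    have e1 : Ex f g (fun b s => ∑ i, mpB vB PHI vS F hFne i b s)
        = Ex f g (fun b s => ∑ e ∈ mX PHI vS F hFne b s, PHI e.1 (b e.1)) := by
      rw [Ex_sum f g Finset.univ (fun i b s => mpB vB PHI vS F hFne i b s)]
      rw [show (∑ i, Ex f g (fun b s => mpB vB PHI vS F hFne i b s))
          = ∑ i, Ex f g (fun b s => PHI i (b i)
            * (if b i ∈ mWB PHI vS F hFne i b s then 1 else 0)) from
        Finset.sum_congr rfl fun i _ =>
          Ex_mpB vB PHI vS F hFne f g hf hf1 hdc hmatch hPHImono i]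
      rw [← Ex_sum f g Finset.univ (fun i b s => PHI i (b i)
        * (if b i ∈ mWB PHI vS F hFne i b s then 1 else 0))]
      congr 1
      funext b s
      exact sum_phi_z PHI vS F hFne hmatch b s (fun i => PHI i (b i))
    have e2 : Ex f g (fun b s => ∑ j, mpS vS PHI vS F hFne j b s)
        ≤ Ex f g (fun b s => ∑ e ∈ mX PHI vS F hFne b s, PHI e.1 (b e.1)) :=
      Ex_mono f g hf hg (fun b s => sum_mpS_le vS PHI vS F hFne hdc hmatch hvSge b s)
    rw [e1]
    linarith
  -- WBB of the seller-offering mechanism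
  have hWBB_SO : 0 ≤ Ex f g (fun b s =>
      (∑ i, mpB vB vB TAU F hFne i b s) - ∑ j, mpS vS vB TAU F hFne j b s) := by
    rw [Ex_sub f g (fun b s => ∑ i, mpB vB vB TAU F hFne i b s)
      (fun b s => ∑ j, mpS vS vB TAU F hFne j b s)]
    have e1 : Ex f g (fun b s => ∑ j, mpS vS vB TAU F hFne j b s)
        = Ex f g (fun b s => ∑ e ∈ mX vB TAU F hFne b s, TAU e.2 (s e.2)) := by
      rw [Ex_sum f g Finset.univ (fun j b s => mpS vS vB TAU F hFne j b s)]
      rw [show (∑ j, Ex f g (fun b s => mpS vS vB TAU F hFne j b s))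
          = ∑ j, Ex f g (fun b s => TAU j (s j)
            * (if s j ∈ mWS vB TAU F hFne j b s then 1 else 0)) from
        Finset.sum_congr rfl fun j _ =>
          Ex_mpS vS vB TAU F hFne f g hg hg1 hdc hmatch hTAUmono j]
      rw [← Ex_sum f g Finset.univ (fun j b s => TAU j (s j)
        * (if s j ∈ mWS vB TAU F hFne j b s then 1 else 0))]
      congr 1
      funext b s
      exact sum_tau_z vB TAU F hFne hmatch b s (fun j => TAU j (s j))
    have e2 : Ex f g (fun b s => ∑ e ∈ mX vB TAU F hFne b s, TAU e.2 (s e.2))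
        ≤ Ex f g (fun b s => ∑ i, mpB vB vB TAU F hFne i b s) :=
      Ex_mono f g hf hg (fun b s => sum_mpB_ge vB vB TAU F hFne hdc hmatch hvBle b s)
    rw [e1]
    linarith
  -- the key bound: any BIC IR WBB implementable mechanism has GFT ≤ GFTBO + GFTSO
  have hKey : ∀ (x' : ProfileB K → ProfileS K' → Fin n × Fin m → ℝ)
      (pB' : Fin n → ProfileB K → ProfileS K' → ℝ)
      (pS' : Fin m → ProfileB K → ProfileS K' → ℝ),
      Implementable F x' →
      (∀ (i : Fin n) (t t' : Fin (K i)),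
        utilB vB f g x' pB' i t t' ≤ utilB vB f g x' pB' i t t) →
      (∀ (j : Fin m) (t t' : Fin (K' j)),
        utilS vS f g x' pS' j t t' ≤ utilS vS f g x' pS' j t t) →
      (∀ (i : Fin n) (t : Fin (K i)), 0 ≤ utilB vB f g x' pB' i t t) →
      (∀ (j : Fin m) (t : Fin (K' j)), 0 ≤ utilS vS f g x' pS' j t t) →
      (0 ≤ Ex f g (fun b s => (∑ i, pB' i b s) - ∑ j, pS' j b s)) →
      Ex f g (fun b s => ∑ i, ∑ j, x' b s (i, j) * (vB i (b i) - vS j (s j)))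
        ≤ GFTBO + GFTSO := by
    intro x' pB' pS' himp hBICB hBICS hIRB hIRS hWBB'
    set GFT' : ℝ := Ex f g (fun b s =>
      ∑ i, ∑ j, x' b s (i, j) * (vB i (b i) - vS j (s j))) with hGFT'
    set A : ℝ := Ex f g (fun b s =>
      ∑ i, ∑ j, x' b s (i, j) * (PHI i (b i) - vS j (s j))) with hA
    set C : ℝ := Ex f g (fun b s =>
      ∑ i, ∑ j, x' b s (i, j) * (vB i (b i) - TAU j (s j))) with hC
    set RB : ℝ := Ex f g (fun b s =>
      ∑ i, (vB i (b i) - PHI i (b i)) * ∑ j, x' b s (i, j)) with hRB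
    set RS : ℝ := Ex f g (fun b s =>
      ∑ j, (TAU j (s j) - vS j (s j)) * ∑ i, x' b s (i, j)) with hRS
    set UB : ℝ := ∑ i, ∑ t, f i t * utilB vB f g x' pB' i t t with hUB
    set US : ℝ := ∑ j, ∑ t, g j t * utilS vS f g x' pS' j t t with hUS
    -- A ≤ GFTBO
    have hA_le : A ≤ GFTBO :=
      dominate vB vS PHI vS F hFne f g hf hg hPHIle hvSge himp
    -- C ≤ GFTSO
    have hC_le : C ≤ GFTSO :=
      dominate vB vS vB TAU F hFne f g hf hg hvBle hTAUge himp
    -- RB ≤ UB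
    have hRB_le : RB ≤ UB := by
      rw [hRB, hUB]
      rw [Ex_sum f g Finset.univ (fun i b s =>
        (vB i (b i) - PHI i (b i)) * ∑ j, x' b s (i, j))]
      exact Finset.sum_le_sum fun i _ =>
        rentB vB f g hf hf1 x' pB' i (hBICB i) (hIRB i)
    -- RS ≤ US
    have hRS_le : RS ≤ US := by
      rw [hRS, hUS]
      rw [Ex_sum f g Finset.univ (fun j b s =>
        (TAU j (s j) - vS j (s j)) * ∑ i, x' b s (i, j))]
      exact Finset.sum_le_sum fun j _ =>
        rentS vS f g hg hg1 x' pS' j (hBICS j) (hIRS j)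
    -- UB + US ≤ GFT'
    have hU_le : UB + US ≤ GFT' := by
      have eUB : UB = Ex f g (fun b s =>
          ∑ i, (vB i (b i) * (∑ j, x' b s (i, j)) - pB' i b s)) := by
        rw [hUB]
        rw [Ex_sum f g Finset.univ (fun i b s =>
          vB i (b i) * (∑ j, x' b s (i, j)) - pB' i b s)]
        exact Finset.sum_congr rfl fun i _ => utilB_sum vB f g hf1 x' pB' i
      have eUS : US = Ex f g (fun b s =>
          ∑ j, (pS' j b s - vS j (s j) * (∑ i, x' b s (i, j)))) := by
        rw [hUS]
        rw [Ex_sum f g Finset.univ (fun j b s =>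
          pS' j b s - vS j (s j) * (∑ i, x' b s (i, j)))]
        exact Finset.sum_congr rfl fun j _ => utilS_sum vS f g hg1 x' pS' j
      have hdiff : GFT' - (UB + US) = Ex f g (fun b s => (∑ i, pB' i b s) - ∑ j, pS' j b s) := by
        rw [eUB, eUS, hGFT']
        rw [← Ex_add f g (fun b s => ∑ i, (vB i (b i) * (∑ j, x' b s (i, j)) - pB' i b s))
          (fun b s => ∑ j, (pS' j b s - vS j (s j) * (∑ i, x' b s (i, j))))]
        rw [← Ex_sub f g (fun b s => ∑ i, ∑ j, x' b s (i, j) * (vB i (b i) - vS j (s j)))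
          (fun b s => (∑ i, (vB i (b i) * (∑ j, x' b s (i, j)) - pB' i b s))
            + ∑ j, (pS' j b s - vS j (s j) * (∑ i, x' b s (i, j))))]
        congr 1
        funext b s
        have e1 : ∑ i, ∑ j, x' b s (i, j) * (vB i (b i) - vS j (s j))
            = (∑ i, vB i (b i) * ∑ j, x' b s (i, j))
              - ∑ j, vS j (s j) * ∑ i, x' b s (i, j) := by
          have h1 : ∀ i, ∑ j, x' b s (i, j) * (vB i (b i) - vS j (s j))
              = vB i (b i) * (∑ j, x' b s (i, j)) - ∑ j, x' b s (i, j) * vS j (s j) := by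
            intro i
            rw [Finset.mul_sum, ← Finset.sum_sub_distrib]
            exact Finset.sum_congr rfl fun j _ => by ring
          rw [Finset.sum_congr rfl fun i _ => h1 i, Finset.sum_sub_distrib]
          congr 1
          rw [Finset.sum_comm]
          exact Finset.sum_congr rfl fun j _ => by
            rw [Finset.mul_sum]
            exact Finset.sum_congr rfl fun i _ => by ring
        rw [e1, Finset.sum_sub_distrib, Finset.sum_sub_distrib]
        ring
      rw [eUB, eUS] at hdiff ⊢
      have := hWBB'
      linarith [hdiff, hWBB']
    -- GFT' = A + RB
    have hsplit1 : GFT' = A + RB := by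
      rw [hGFT', hA, hRB, ← Ex_add f g
        (fun b s => ∑ i, ∑ j, x' b s (i, j) * (PHI i (b i) - vS j (s j)))
        (fun b s => ∑ i, (vB i (b i) - PHI i (b i)) * ∑ j, x' b s (i, j))]
      congr 1
      funext b s
      rw [← Finset.sum_add_distrib]
      refine Finset.sum_congr rfl fun i _ => ?_
      rw [Finset.mul_sum, ← Finset.sum_add_distrib]
      exact Finset.sum_congr rfl fun j _ => by ring
    -- GFT' = C + RS
    have hsplit2 : GFT' = C + RS := by
      rw [hGFT', hC, hRS, ← Ex_add f g
        (fun b s => ∑ i, ∑ j, x' b s (i, j) * (vB i (b i) - TAU j (s j)))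
        (fun b s => ∑ j, (TAU j (s j) - vS j (s j)) * ∑ i, x' b s (i, j))]
      congr 1
      funext b s
      have e2 : ∑ j, (TAU j (s j) - vS j (s j)) * ∑ i, x' b s (i, j)
          = ∑ i, ∑ j, x' b s (i, j) * (TAU j (s j) - vS j (s j)) := by
        rw [Finset.sum_comm]
        exact Finset.sum_congr rfl fun j _ => by
          rw [Finset.mul_sum]
          exact Finset.sum_congr rfl fun i _ => by ring
      rw [e2, ← Finset.sum_add_distrib]
      refine Finset.sum_congr rfl fun i _ => ?_
      rw [← Finset.sum_add_distrib]
      exact Finset.sum_congr rfl fun j _ => by ring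
    linarith
  -- choose the better of the two mechanisms
  by_cases hc : GFTSO ≤ GFTBO
  · refine ⟨mX PHI vS F hFne, mpB vB PHI vS F hFne, mpS vS PHI vS F hFne,
      fun b s => mX_mem PHI vS F hFne b s,
      DSIC_B vB PHI vS F hFne hdc hmatch hPHImono hvB,
      DSIC_S vS PHI vS F hFne hdc hmatch hvSmono hvS,
      IR_B vB PHI vS F hFne hvB,
      IR_S vS PHI vS F hFne hvS,
      hWBB_BO, ?_⟩
    intro x' pB' pS' himp hBICB hBICS hIRB hIRS hWBB'
    have := hKey x' pB' pS' himp hBICB hBICS hIRB hIRS hWBB'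
    rw [← hGFTBO]
    linarith
  · push_neg at hc
    refine ⟨mX vB TAU F hFne, mpB vB vB TAU F hFne, mpS vS vB TAU F hFne,
      fun b s => mX_mem vB TAU F hFne b s,
      DSIC_B vB vB TAU F hFne hdc hmatch hvBmono hvB,
      DSIC_S vS vB TAU F hFne hdc hmatch hTAUmono hvS,
      IR_B vB vB TAU F hFne hvB,
      IR_S vS vB TAU F hFne hvS,
      hWBB_SO, ?_⟩
    intro x' pB' pS' himp hBICB hBICS hIRB hIRS hWBB'
    have := hKey x' pB' pS' himp hBICB hBICS hIRB hIRS hWBB'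
    rw [← hGFTSO]
    linarith

end Stmt10
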